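/- arXiv:2006.12308 — 4 statements merged into one kernel-verified Lean document; each statement's English description precedes it below -/
import Mathlib

section
/- Proposition 3.3(1) (direct summands): If M and N are objects of 𝒜 such that M ⊕ N ∈ rG(𝒞), then M ∈ rG(𝒞). -/
open CategoryTheory CategoryTheory.Limits CategoryTheory.Abelian

universe w v u

namespace RGS

variable {𝒜 : Type u} [Category.{v} 𝒜] [Abelian 𝒜]

/-- `𝒞` is a (strictly full) additive subcategory of `𝒜`: it contains the zero objects and is
closed under binary biproducts and isomorphisms. -/
structure IsAdditiveSubcat (𝒞 : Set 𝒜) : Prop where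
  zero_mem : ∀ Z : 𝒜, IsZero Z → Z ∈ 𝒞
  biprod_mem : ∀ X Y : 𝒜, X ∈ 𝒞 → Y ∈ 𝒞 → (X ⊞ Y) ∈ 𝒞
  iso_mem : ∀ {X Y : 𝒜}, (X ≅ Y) → X ∈ 𝒞 → Y ∈ 𝒞

/-- The left orthogonal class `⊥𝒞`, consisting of the objects `A` with
`Ext^i (A, C) = 0` for all `i ≥ 1` and all `C ∈ 𝒞`. -/
def leftPerp [HasExt.{w} 𝒜] (𝒞 : Set 𝒜) : Set 𝒜 :=
  {A | ∀ C ∈ 𝒞, ∀ i : ℕ, Subsingleton (Abelian.Ext A C (i + 1))}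

/-- `𝒞` is self-orthogonal: `Ext^i (C, C') = 0` for all `i ≥ 1` and `C, C' ∈ 𝒞`. -/
def IsSelfOrthogonal [HasExt.{w} 𝒜] (𝒞 : Set 𝒜) : Prop :=
  ∀ C ∈ 𝒞, ∀ C' ∈ 𝒞, ∀ i : ℕ, Subsingleton (Abelian.Ext C C' (i + 1))

/-- An exact sequence `0 ⟶ A ⟶ X⁰ ⟶ X¹ ⟶ ⋯` in `𝒜` with all the `Xⁱ` in `𝒳`. -/
structure Coresolution (𝒳 : Set 𝒜) (A : 𝒜) where
  X : ℕ → 𝒜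
  d : ∀ n, X n ⟶ X (n + 1)
  ι : A ⟶ X 0
  mem : ∀ n, X n ∈ 𝒳
  mono_ι : Mono ι
  w0 : ι ≫ d 0 = 0
  w : ∀ n, d n ≫ d (n + 1) = 0
  exact0 : (ShortComplex.mk ι (d 0) w0).Exact
  exact : ∀ n, (ShortComplex.mk (d n) (d (n + 1)) (w n)).Exact

/-- The coresolution remains exact after applying `Hom(-, W)` for every `W ∈ 𝒲`. -/
def Coresolution.HomExact {𝒳 : Set 𝒜} {A : 𝒜} (R : Coresolution 𝒳 A) (𝒲 : Set 𝒜) : Prop :=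
  ∀ W ∈ 𝒲,
    (∀ f : A ⟶ W, ∃ g : R.X 0 ⟶ W, R.ι ≫ g = f) ∧
    (∀ g : R.X 0 ⟶ W, R.ι ≫ g = 0 → ∃ h : R.X 1 ⟶ W, R.d 0 ≫ h = g) ∧
    (∀ n, ∀ g : R.X (n + 1) ⟶ W, R.d n ≫ g = 0 → ∃ h : R.X (n + 2) ⟶ W, R.d (n + 1) ≫ h = g)

/-- `cores 𝒞̃`: the objects admitting an exact and `Hom(-,𝒞)`-exact coresolution by
objects of `𝒞`. -/
def coresTilde (𝒞 : Set 𝒜) : Set 𝒜 :=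
  {A | ∃ R : Coresolution 𝒞 A, R.HomExact 𝒞}

/-- The right Gorenstein subcategory `rG(𝒞) = ⊥𝒞 ∩ cores 𝒞̃`. -/
def rG [HasExt.{w} 𝒜] (𝒞 : Set 𝒜) : Set 𝒜 :=
  leftPerp.{w} 𝒞 ∩ coresTilde 𝒞

/-- `A` admits an exact resolution `0 ⟶ X_n ⟶ ⋯ ⟶ X_1 ⟶ X_0 ⟶ A ⟶ 0` with all `X_i ∈ 𝒳`
(of length exactly `n`). -/
def HasResLength (𝒳 : Set 𝒜) : 𝒜 → ℕ → Prop
  | A, 0 => ∃ X ∈ 𝒳, Nonempty (X ≅ A)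
  | A, n + 1 => ∃ (K X : 𝒜) (f : K ⟶ X) (g : X ⟶ A) (w : f ≫ g = 0),
      (ShortComplex.mk f g w).ShortExact ∧ X ∈ 𝒳 ∧ HasResLength 𝒳 K n

/-- `𝒳-pd A ≤ n`. -/
def pdLE (𝒳 : Set 𝒜) (A : 𝒜) (n : ℕ) : Prop := ∃ m ≤ n, HasResLength 𝒳 A m

/-- The class `𝒳-pd^{<∞}` of objects of finite `𝒳`-projective dimension. -/
def pdFin (𝒳 : Set 𝒜) : Set 𝒜 := {A | ∃ n : ℕ, HasResLength 𝒳 A n}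

/-- An unbounded exact sequence `⋯ ⟶ X_{n+1} ⟶ X_n ⟶ ⋯` (indexed by `ℤ`). -/
structure ZSequence (𝒜 : Type u) [Category.{v} 𝒜] [Abelian 𝒜] where
  X : ℤ → 𝒜
  d : ∀ n : ℤ, X (n + 1) ⟶ X n
  w : ∀ n : ℤ, d (n + 1) ≫ d n = 0
  exact : ∀ n : ℤ, (ShortComplex.mk (d (n + 1)) (d n) (w n)).Exact

/-- The unbounded sequence remains exact after applying `Hom(-, W)` for every `W ∈ 𝒲`. -/
def ZSequence.HomExact (S : ZSequence 𝒜) (𝒲 : Set 𝒜) : Prop :=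
  ∀ W ∈ 𝒲, ∀ n : ℤ, ∀ g : S.X (n + 1) ⟶ W, S.d (n + 1) ≫ g = 0 →
    ∃ h : S.X n ⟶ W, S.d n ≫ h = g

/-- `𝒞` is an injective cogenerator for `𝒳`. -/
def IsInjectiveCogen [HasExt.{w} 𝒜] (𝒞 𝒳 : Set 𝒜) : Prop :=
  𝒞 ⊆ 𝒳 ∧ (∀ X ∈ 𝒳, ∀ C ∈ 𝒞, ∀ i : ℕ, Subsingleton (Abelian.Ext X C (i + 1))) ∧
  (∀ X ∈ 𝒳, ∃ (C X' : 𝒜) (f : X ⟶ C) (g : C ⟶ X') (w : f ≫ g = 0),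
    (ShortComplex.mk f g w).ShortExact ∧ C ∈ 𝒞 ∧ X' ∈ 𝒳)

/-- `𝓟` is a projective generator for `𝒳`. -/
def IsProjectiveGen [HasExt.{w} 𝒜] (𝓟 𝒳 : Set 𝒜) : Prop :=
  𝓟 ⊆ 𝒳 ∧ (∀ P ∈ 𝓟, ∀ X ∈ 𝒳, ∀ i : ℕ, Subsingleton (Abelian.Ext P X (i + 1))) ∧
  (∀ X ∈ 𝒳, ∃ (X' P : 𝒜) (f : X' ⟶ P) (g : P ⟶ X) (w : f ≫ g = 0),
    (ShortComplex.mk f g w).ShortExact ∧ P ∈ 𝓟 ∧ X' ∈ 𝒳)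

/-- `(𝒰, 𝒱)` is a cotorsion pair: each class is the `Ext¹`-orthogonal of the other. -/
structure IsCotorsionPair [HasExt.{w} 𝒜] (𝒰 𝒱 : Set 𝒜) : Prop where
  mem_left_iff : ∀ A : 𝒜, A ∈ 𝒰 ↔ ∀ V ∈ 𝒱, Subsingleton (Abelian.Ext A V 1)
  mem_right_iff : ∀ A : 𝒜, A ∈ 𝒱 ↔ ∀ U ∈ 𝒰, Subsingleton (Abelian.Ext U A 1)

/-- The pair `(𝒰, 𝒱)` is hereditary: `Ext^i (U, V) = 0` for all `i ≥ 1`. -/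
def IsHereditaryPair [HasExt.{w} 𝒜] (𝒰 𝒱 : Set 𝒜) : Prop :=
  ∀ U ∈ 𝒰, ∀ V ∈ 𝒱, ∀ i : ℕ, Subsingleton (Abelian.Ext U V (i + 1))

/-- The pair `(𝒰, 𝒱)` has enough injectives. -/
def PairHasEnoughInjectives (𝒰 𝒱 : Set 𝒜) : Prop :=
  ∀ A : 𝒜, ∃ (V U : 𝒜) (f : A ⟶ V) (g : V ⟶ U) (w : f ≫ g = 0),
    (ShortComplex.mk f g w).ShortExact ∧ V ∈ 𝒱 ∧ U ∈ 𝒰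



/-! ### Auxiliary machinery for Proposition 3.3(1) -/

section DirectSummandAux

variable {𝒞 : Set 𝒜}

private lemma eq_total_comp {Y Z W : 𝒜} (h : Y ⊞ Z ⟶ W) :
    h = biprod.fst ≫ (biprod.inl ≫ h) + biprod.snd ≫ (biprod.inr ≫ h) := by
  conv_lhs => rw [← Category.id_comp h, ← biprod.total,
    Preadditive.add_comp, Category.assoc, Category.assoc]

private lemma comp_fst_inl {Y Z T : 𝒜} (v : T ⟶ Y ⊞ Z) (h : v ≫ biprod.snd = 0) :
    (v ≫ biprod.fst) ≫ biprod.inl = v := by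
  apply biprod.hom_ext <;> simp [h]

/-- Output data of one step of the (dual) horseshoe construction. -/
structure HalfOut (𝒞 : Set 𝒜) (B : 𝒜) {D CK KK A : 𝒜} (ι : KK ⟶ CK) (mA : A ⟶ D) where
  m : B ⟶ D ⊞ CK
  mmono : Mono m
  E : ∀ {W : 𝒜}, W ∈ 𝒞 → ∀ f : B ⟶ W, ∃ g : D ⊞ CK ⟶ W, m ≫ g = f
  i : cokernel mA ⟶ cokernel m
  p : cokernel m ⟶ cokernel ι
  iw : i ≫ p = 0
  ppi : Epi p
  iex : ∀ {T : 𝒜} (x : T ⟶ cokernel m), x ≫ p = 0 →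
    ∃ (T' : 𝒜) (ρ : T' ⟶ T) (_ : Epi ρ) (y : T' ⟶ cokernel mA), ρ ≫ x = y ≫ i
  pdesc : ∀ {W : 𝒜} (g : cokernel m ⟶ W), i ≫ g = 0 → ∃ u : cokernel ι ⟶ W, p ≫ u = g
  EXT : ∀ {W : 𝒜}, W ∈ 𝒞 → ∀ f : cokernel mA ⟶ W, ∃ g : cokernel m ⟶ W, i ≫ g = f

/-- One step of the dual horseshoe construction: given a short exact sequence
`0 ⟶ A ⟶ B ⟶ KK ⟶ 0` (in "refinement" form) with suitable `Hom(-,𝒞)`-lifting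
properties, and embeddings of `A` and `KK`, embed `B` into `D ⊞ CK`. -/
noncomputable def stepHalf (𝒞 : Set 𝒜) {D CK KK A B : 𝒜} (hD : D ∈ 𝒞)
    (ι : KK ⟶ CK) (ιmono : Mono ι)
    (EK : ∀ {W : 𝒜}, W ∈ 𝒞 → ∀ f : KK ⟶ W, ∃ g : CK ⟶ W, ι ≫ g = f)
    (mA : A ⟶ D) (mAmono : Mono mA)
    (EA : ∀ {W : 𝒜}, W ∈ 𝒞 → ∀ f : A ⟶ W, ∃ g : D ⟶ W, mA ≫ g = f)
    (i : A ⟶ B) (p : B ⟶ KK) (hiw : i ≫ p = 0) (hppi : Epi p)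
    (hiex : ∀ {T : 𝒜} (x : T ⟶ B), x ≫ p = 0 →
      ∃ (T' : 𝒜) (ρ : T' ⟶ T) (_ : Epi ρ) (y : T' ⟶ A), ρ ≫ x = y ≫ i)
    (hpdesc : ∀ {W : 𝒜} (g : B ⟶ W), i ≫ g = 0 → ∃ u : KK ⟶ W, p ≫ u = g)
    (hEXT : ∀ {W : 𝒜}, W ∈ 𝒞 → ∀ f : A ⟶ W, ∃ g : B ⟶ W, i ≫ g = f) :
    HalfOut 𝒞 B ι mA := by
  classical
  haveI := ιmono; haveI := mAmono; haveI := hppi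
  have hex := hEXT hD mA
  set φ := hex.choose with hφdef
  have hφ : i ≫ φ = mA := hex.choose_spec
  set m : B ⟶ D ⊞ CK := biprod.lift φ (p ≫ ι) with hm
  have him : i ≫ m = mA ≫ biprod.inl := by
    apply biprod.hom_ext
    · simp [hm, hφ]
    · rw [Category.assoc, hm, biprod.lift_snd, Category.assoc, biprod.inl_snd,
        comp_zero, ← Category.assoc, hiw, zero_comp]
  have hwi : mA ≫ biprod.inl ≫ cokernel.π m = 0 := by
    rw [← Category.assoc, ← him, Category.assoc, cokernel.condition, comp_zero]
  set iP : cokernel mA ⟶ cokernel m := cokernel.desc mA (biprod.inl ≫ cokernel.π m) hwi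
    with hiP
  have hwp : m ≫ biprod.snd ≫ cokernel.π ι = 0 := by
    rw [← Category.assoc]
    simp [hm, Category.assoc, cokernel.condition]
  set pP : cokernel m ⟶ cokernel ι := cokernel.desc m (biprod.snd ≫ cokernel.π ι) hwp
    with hpP
  have hπi : cokernel.π mA ≫ iP = biprod.inl ≫ cokernel.π m := cokernel.π_desc _ _ _
  have hπp : cokernel.π m ≫ pP = biprod.snd ≫ cokernel.π ι := cokernel.π_desc _ _ _
  have mmono : Mono m := by
    apply Preadditive.mono_of_cancel_zero
    intro T x hx
    have h1 : x ≫ φ = 0 := by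
      rw [← biprod.lift_fst φ (p ≫ ι), ← Category.assoc, ← hm, hx, zero_comp]
    have h2 : x ≫ p = 0 := by
      have h3 : (x ≫ p) ≫ ι = 0 := by
        rw [Category.assoc, ← biprod.lift_snd φ (p ≫ ι), ← Category.assoc, ← hm, hx,
          zero_comp]
      exact zero_of_comp_mono ι h3
    obtain ⟨T', ρ, hρ, y, hy⟩ := hiex x h2
    have hy0 : y ≫ mA = 0 := by
      rw [← hφ, ← Category.assoc, ← hy, Category.assoc, h1, comp_zero]
    have y0 : y = 0 := zero_of_comp_mono mA hy0
    haveI := hρ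
    exact zero_of_epi_comp ρ (by rw [hy, y0, zero_comp])
  refine
    { m := m, mmono := mmono, i := iP, p := pP
      E := ?_, iw := ?_, ppi := ?_, iex := ?_, pdesc := ?_, EXT := ?_ }
  · -- E
    intro W hW f
    obtain ⟨gA, hgA⟩ := EA hW (i ≫ f)
    have hδ : i ≫ (f - φ ≫ gA) = 0 := by
      rw [Preadditive.comp_sub, ← Category.assoc, hφ, hgA, sub_self]
    obtain ⟨u, hu⟩ := hpdesc (f - φ ≫ gA) hδ
    obtain ⟨hc, hhc⟩ := EK hW u
    refine ⟨biprod.desc gA hc, ?_⟩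
    rw [hm, biprod.lift_desc, Category.assoc, hhc, hu]
    abel
  · -- iw
    rw [← cancel_epi (cokernel.π mA), ← Category.assoc, hπi, Category.assoc, hπp,
      comp_zero]
    rw [← Category.assoc, biprod.inl_snd, zero_comp]
  · -- ppi
    haveI : Epi (biprod.snd ≫ cokernel.π ι : D ⊞ CK ⟶ _) := epi_comp _ _
    exact epi_of_epi_fac hπp
  · -- iex
    intro T x hx
    obtain ⟨T₁, ρ₁, hρ₁, y, hy⟩ := surjective_up_to_refinements_of_epi (cokernel.π m) x
    have h1 : (y ≫ biprod.snd) ≫ cokernel.π ι = 0 := by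
      have h2 : y ≫ cokernel.π m ≫ pP = ρ₁ ≫ x ≫ pP := by
        rw [← Category.assoc, ← hy, Category.assoc]
      rw [hπp, hx, comp_zero] at h2
      rw [Category.assoc]; exact h2
    set z : T₁ ⟶ KK := Abelian.monoLift ι (y ≫ biprod.snd) h1 with hz
    have hzι : z ≫ ι = y ≫ biprod.snd := Abelian.monoLift_comp ι _ h1
    obtain ⟨T₂, ρ₂, hρ₂, u, hu⟩ := surjective_up_to_refinements_of_epi p z
    set v : T₂ ⟶ D ⊞ CK := ρ₂ ≫ y - u ≫ m with hv
    have e1 : (ρ₂ ≫ y) ≫ biprod.snd = (u ≫ p) ≫ ι := by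
      rw [Category.assoc, ← hzι, ← Category.assoc, hu]
    have e2 : (u ≫ m) ≫ biprod.snd = (u ≫ p) ≫ ι := by
      rw [Category.assoc, hm, biprod.lift_snd, ← Category.assoc]
    have hvsnd : v ≫ biprod.snd = 0 := by
      rw [hv, Preadditive.sub_comp, e1, e2, sub_self]
    have hvdec : (v ≫ biprod.fst) ≫ biprod.inl = v := comp_fst_inl v hvsnd
    haveI := hρ₁; haveI := hρ₂
    refine ⟨T₂, ρ₂ ≫ ρ₁, epi_comp _ _, (v ≫ biprod.fst) ≫ cokernel.π mA, ?_⟩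
    have e3 : ((v ≫ biprod.fst) ≫ cokernel.π mA) ≫ iP = v ≫ cokernel.π m := by
      rw [Category.assoc, hπi, ← Category.assoc, hvdec]
    rw [e3]
    conv_rhs => rw [hv, Preadditive.sub_comp, Category.assoc, Category.assoc,
      cokernel.condition, comp_zero, sub_zero, ← hy]
    rw [Category.assoc]
  · -- pdesc
    intro W g hg
    have hinl : biprod.inl ≫ cokernel.π m ≫ g = 0 := by
      rw [← Category.assoc, ← hπi, Category.assoc, hg, comp_zero]
    have hm0 : m ≫ cokernel.π m ≫ g = 0 := by
      rw [← Category.assoc, cokernel.condition, zero_comp]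
    have hfst : m ≫ biprod.fst = φ := by rw [hm, biprod.lift_fst]
    have hsnd : m ≫ biprod.snd = p ≫ ι := by rw [hm, biprod.lift_snd]
    have hexp : φ ≫ (biprod.inl ≫ cokernel.π m ≫ g)
        + (p ≫ ι) ≫ (biprod.inr ≫ cokernel.π m ≫ g) = 0 := by
      rw [← hfst, ← hsnd, Category.assoc, Category.assoc, ← Preadditive.comp_add,
        ← eq_total_comp (cokernel.π m ≫ g)]
      exact hm0
    have hι : ι ≫ biprod.inr ≫ cokernel.π m ≫ g = 0 := by
      apply zero_of_epi_comp p
      rw [hinl, comp_zero, zero_add, Category.assoc] at hexp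
      rw [← Category.assoc]
      rw [← Category.assoc] at hexp
      exact hexp
    refine ⟨cokernel.desc ι (biprod.inr ≫ cokernel.π m ≫ g) hι, ?_⟩
    rw [← cancel_epi (cokernel.π m), ← Category.assoc, hπp, Category.assoc,
      cokernel.π_desc]
    conv_rhs => rw [eq_total_comp (cokernel.π m ≫ g)]
    rw [hinl, comp_zero, zero_add]
  · -- EXT
    intro W hW f
    have h0 : i ≫ (φ ≫ cokernel.π mA ≫ f) = 0 := by
      rw [← Category.assoc, hφ, ← Category.assoc, cokernel.condition, zero_comp]
    obtain ⟨u, hu⟩ := hpdesc _ h0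
    obtain ⟨hc, hhc⟩ := EK hW (-u)
    have hG : m ≫ biprod.desc (cokernel.π mA ≫ f) hc = 0 := by
      rw [hm, biprod.lift_desc, Category.assoc, hhc, Preadditive.comp_neg, hu,
        add_neg_cancel]
    refine ⟨cokernel.desc m _ hG, ?_⟩
    rw [← cancel_epi (cokernel.π mA), ← Category.assoc, hπi, Category.assoc,
      cokernel.π_desc, biprod.inl_desc]

/-- The full inductive state at level `n` of the construction of a coresolution of a
direct summand. -/
structure LS (𝒞 : Set 𝒜) {G : 𝒜} (R : Coresolution 𝒞 G) (n : ℕ) where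
  D : 𝒜
  Dmem : D ∈ 𝒞
  K : 𝒜
  ι : K ⟶ R.X (n + 1)
  ιmono : Mono ι
  ιw : ι ≫ R.d (n + 1) = 0
  ιex : ∀ {T : 𝒜} (y : T ⟶ R.X (n + 1)), y ≫ R.d (n + 1) = 0 →
    ∃ (T' : 𝒜) (ρ : T' ⟶ T) (_ : Epi ρ) (z : T' ⟶ K), ρ ≫ y = z ≫ ι
  liftd : ∀ {W : 𝒜}, W ∈ 𝒞 → ∀ g : R.X (n + 1) ⟶ W, ι ≫ g = 0 →
    ∃ h : R.X (n + 2) ⟶ W, R.d (n + 1) ≫ h = g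
  EK : ∀ {W : 𝒜}, W ∈ 𝒞 → ∀ f : K ⟶ W, ∃ g : R.X (n + 1) ⟶ W, ι ≫ g = f
  B : 𝒜
  B' : 𝒜
  m : B ⟶ D
  m' : B' ⟶ D
  mmono : Mono m
  m'mono : Mono m'
  E : ∀ {W : 𝒜}, W ∈ 𝒞 → ∀ f : B ⟶ W, ∃ g : D ⟶ W, m ≫ g = f
  E' : ∀ {W : 𝒜}, W ∈ 𝒞 → ∀ f : B' ⟶ W, ∃ g : D ⟶ W, m' ≫ g = f
  i : B' ⟶ cokernel m
  p : cokernel m ⟶ K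
  iw : i ≫ p = 0
  ppi : Epi p
  iex : ∀ {T : 𝒜} (x : T ⟶ cokernel m), x ≫ p = 0 →
    ∃ (T' : 𝒜) (ρ : T' ⟶ T) (_ : Epi ρ) (y : T' ⟶ B'), ρ ≫ x = y ≫ i
  pdesc : ∀ {W : 𝒜} (g : cokernel m ⟶ W), i ≫ g = 0 → ∃ u : K ⟶ W, p ≫ u = g
  EXT : ∀ {W : 𝒜}, W ∈ 𝒞 → ∀ f : B' ⟶ W, ∃ g : cokernel m ⟶ W, i ≫ g = f
  i' : B ⟶ cokernel m'
  p' : cokernel m' ⟶ K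
  i'w : i' ≫ p' = 0
  p'pi : Epi p'
  i'ex : ∀ {T : 𝒜} (x : T ⟶ cokernel m'), x ≫ p' = 0 →
    ∃ (T' : 𝒜) (ρ : T' ⟶ T) (_ : Epi ρ) (y : T' ⟶ B), ρ ≫ x = y ≫ i'
  p'desc : ∀ {W : 𝒜} (g : cokernel m' ⟶ W), i' ≫ g = 0 → ∃ u : K ⟶ W, p' ≫ u = g
  EXT' : ∀ {W : 𝒜}, W ∈ 𝒞 → ∀ f : B ⟶ W, ∃ g : cokernel m' ⟶ W, i' ≫ g = f

/-- The inductive step. -/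
@[reducible]
noncomputable def lsStep (h𝒞 : IsAdditiveSubcat 𝒞) {G : 𝒜} {R : Coresolution 𝒞 G}
    (hR : R.HomExact 𝒞) (n : ℕ) (l : LS 𝒞 R n) : LS 𝒞 R (n + 1) :=
  let U := stepHalf 𝒞 l.Dmem l.ι l.ιmono l.EK l.m' l.m'mono l.E' l.i l.p l.iw l.ppi
    l.iex l.pdesc l.EXT
  let V := stepHalf 𝒞 l.Dmem l.ι l.ιmono l.EK l.m l.mmono l.E l.i' l.p' l.i'w l.p'pi
    l.i'ex l.p'desc l.EXT'
  { D := l.D ⊞ R.X (n + 1)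
    Dmem := h𝒞.biprod_mem _ _ l.Dmem (R.mem (n + 1))
    K := cokernel l.ι
    ι := cokernel.desc l.ι (R.d (n + 1)) l.ιw
    ιmono := by
      apply Preadditive.mono_of_cancel_zero
      intro T x hx
      obtain ⟨T₁, ρ, hρ, y, hy⟩ := surjective_up_to_refinements_of_epi (cokernel.π l.ι) x
      have h1 : y ≫ R.d (n + 1) = 0 := by
        rw [← cokernel.π_desc l.ι (R.d (n + 1)) l.ιw, ← Category.assoc, ← hy,
          Category.assoc, hx, comp_zero]
      obtain ⟨T₂, σ, hσ, z, hz⟩ := l.ιex y h1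
      haveI := hρ; haveI := hσ
      have h2 : (σ ≫ ρ) ≫ x = 0 := by
        rw [Category.assoc, hy, ← Category.assoc, hz, Category.assoc,
          cokernel.condition, comp_zero]
      haveI : Epi (σ ≫ ρ) := epi_comp _ _
      exact zero_of_epi_comp (σ ≫ ρ) h2
    ιw := by
      rw [← cancel_epi (cokernel.π l.ι), ← Category.assoc, cokernel.π_desc, R.w,
        comp_zero]
    ιex := by
      intro T y hy
      obtain ⟨T', ρ, hρ, z, hz⟩ := (R.exact (n + 1)).exact_up_to_refinements y hy
      refine ⟨T', ρ, hρ, z ≫ cokernel.π l.ι, ?_⟩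
      rw [Category.assoc, cokernel.π_desc]
      exact hz
    liftd := by
      intro W hW g hg
      have h1 : R.d (n + 1) ≫ g = 0 := by
        rw [← cokernel.π_desc l.ι (R.d (n + 1)) l.ιw, Category.assoc, hg, comp_zero]
      exact (hR W hW).2.2 (n + 1) g h1
    EK := by
      intro W hW f
      have h0 : l.ι ≫ cokernel.π l.ι ≫ f = 0 := by
        rw [← Category.assoc, cokernel.condition, zero_comp]
      obtain ⟨h, hh⟩ := l.liftd hW (cokernel.π l.ι ≫ f) h0
      refine ⟨h, ?_⟩
      rw [← cancel_epi (cokernel.π l.ι), ← Category.assoc, cokernel.π_desc, hh]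
    B := cokernel l.m
    B' := cokernel l.m'
    m := U.m
    m' := V.m
    mmono := U.mmono
    m'mono := V.mmono
    E := U.E
    E' := V.E
    i := U.i
    p := U.p
    iw := U.iw
    ppi := U.ppi
    iex := U.iex
    pdesc := U.pdesc
    EXT := U.EXT
    i' := V.i
    p' := V.p
    i'w := V.iw
    p'pi := V.ppi
    i'ex := V.iex
    p'desc := V.pdesc
    EXT' := V.EXT }

/-- The base case of the construction. -/
@[reducible]
noncomputable def lsBase {M N : 𝒜} (R : Coresolution 𝒞 (M ⊞ N)) (hR : R.HomExact 𝒞) :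
    LS 𝒞 R 0 :=
  haveI := R.mono_ι
  { D := R.X 0
    Dmem := R.mem 0
    K := cokernel R.ι
    ι := cokernel.desc R.ι (R.d 0) R.w0
    ιmono := by
      apply Preadditive.mono_of_cancel_zero
      intro T x hx
      obtain ⟨T₁, ρ, hρ, y, hy⟩ := surjective_up_to_refinements_of_epi (cokernel.π R.ι) x
      have h1 : y ≫ R.d 0 = 0 := by
        rw [← cokernel.π_desc R.ι (R.d 0) R.w0, ← Category.assoc, ← hy,
          Category.assoc, hx, comp_zero]
      obtain ⟨T₂, σ, hσ, z, hz⟩ := R.exact0.exact_up_to_refinements y h1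
      haveI := hρ; haveI := hσ
      have h2 : (σ ≫ ρ) ≫ x = 0 := by
        rw [Category.assoc, hy, ← Category.assoc, hz, Category.assoc,
          cokernel.condition, comp_zero]
      haveI : Epi (σ ≫ ρ) := epi_comp _ _
      exact zero_of_epi_comp (σ ≫ ρ) h2
    ιw := by
      rw [← cancel_epi (cokernel.π R.ι), ← Category.assoc, cokernel.π_desc, R.w,
        comp_zero]
    ιex := by
      intro T y hy
      obtain ⟨T', ρ, hρ, z, hz⟩ := (R.exact 0).exact_up_to_refinements y hy
      refine ⟨T', ρ, hρ, z ≫ cokernel.π R.ι, ?_⟩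
      rw [Category.assoc, cokernel.π_desc]
      exact hz
    liftd := by
      intro W hW g hg
      have h1 : R.d 0 ≫ g = 0 := by
        rw [← cokernel.π_desc R.ι (R.d 0) R.w0, Category.assoc, hg, comp_zero]
      exact (hR W hW).2.2 0 g h1
    EK := by
      intro W hW f
      have h0 : R.ι ≫ cokernel.π R.ι ≫ f = 0 := by
        rw [← Category.assoc, cokernel.condition, zero_comp]
      obtain ⟨h, hh⟩ := (hR W hW).2.1 (cokernel.π R.ι ≫ f) h0
      refine ⟨h, ?_⟩
      rw [← cancel_epi (cokernel.π R.ι), ← Category.assoc, cokernel.π_desc, hh]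
    B := M
    B' := N
    m := biprod.inl ≫ R.ι
    m' := biprod.inr ≫ R.ι
    mmono := mono_comp _ _
    m'mono := mono_comp _ _
    E := by
      intro W hW f
      obtain ⟨g, hg⟩ := (hR W hW).1 (biprod.desc f 0)
      exact ⟨g, by rw [Category.assoc, hg, biprod.inl_desc]⟩
    E' := by
      intro W hW f
      obtain ⟨g, hg⟩ := (hR W hW).1 (biprod.desc 0 f)
      exact ⟨g, by rw [Category.assoc, hg, biprod.inr_desc]⟩
    i := biprod.inr ≫ R.ι ≫ cokernel.π (biprod.inl ≫ R.ι)
    p := cokernel.desc (biprod.inl ≫ R.ι) (cokernel.π R.ι)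
      (by rw [Category.assoc, cokernel.condition, comp_zero])
    iw := by
      rw [Category.assoc, Category.assoc, cokernel.π_desc, cokernel.condition,
        comp_zero]
    ppi := epi_of_epi_fac (cokernel.π_desc _ _ _)
    iex := by
      intro T x hx
      obtain ⟨T₁, ρ₁, hρ₁, y, hy⟩ :=
        surjective_up_to_refinements_of_epi (cokernel.π (biprod.inl ≫ R.ι)) x
      have h2 : y ≫ cokernel.π R.ι = 0 := by
        rw [← cokernel.π_desc (biprod.inl ≫ R.ι) (cokernel.π R.ι)
          (by rw [Category.assoc, cokernel.condition, comp_zero]),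
          ← Category.assoc, ← hy, Category.assoc, hx, comp_zero]
      set z := Abelian.monoLift R.ι y h2 with hzdef
      have hz : z ≫ R.ι = y := Abelian.monoLift_comp R.ι y h2
      have hdec : R.ι ≫ cokernel.π (biprod.inl ≫ R.ι)
          = biprod.snd ≫ (biprod.inr ≫ R.ι ≫ cokernel.π (biprod.inl ≫ R.ι)) := by
        conv_lhs => rw [eq_total_comp (R.ι ≫ cokernel.π (biprod.inl ≫ R.ι))]
        rw [← Category.assoc biprod.inl, cokernel.condition, comp_zero, zero_add]
      refine ⟨T₁, ρ₁, hρ₁, z ≫ biprod.snd, ?_⟩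
      have hgoal : ρ₁ ≫ x = z ≫ (R.ι ≫ cokernel.π (biprod.inl ≫ R.ι)) := by
        rw [hy, ← hz, Category.assoc]
      rw [hgoal]
      conv_lhs => rw [hdec]
      simp only [Category.assoc]
    pdesc := by
      intro W g hg
      have ha : biprod.inl ≫ R.ι ≫ cokernel.π (biprod.inl ≫ R.ι) ≫ g = 0 := by
        rw [← Category.assoc biprod.inl R.ι, cokernel.condition_assoc, zero_comp]
      have hb : biprod.inr ≫ R.ι ≫ cokernel.π (biprod.inl ≫ R.ι) ≫ g = 0 := by
        simpa only [Category.assoc] using hg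
      have h0 : R.ι ≫ cokernel.π (biprod.inl ≫ R.ι) ≫ g = 0 := by
        apply biprod.hom_ext'
        · simpa only [Category.assoc, comp_zero] using ha
        · simpa only [Category.assoc, comp_zero] using hb
      refine ⟨cokernel.desc R.ι (cokernel.π (biprod.inl ≫ R.ι) ≫ g) h0, ?_⟩
      rw [← cancel_epi (cokernel.π (biprod.inl ≫ R.ι)), ← Category.assoc,
        cokernel.π_desc, cokernel.π_desc]
    EXT := by
      intro W hW f
      obtain ⟨g₀, hg₀⟩ := (hR W hW).1 (biprod.desc 0 f)
      have h0 : (biprod.inl ≫ R.ι) ≫ g₀ = 0 := by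
        rw [Category.assoc, hg₀, biprod.inl_desc]
      refine ⟨cokernel.desc (biprod.inl ≫ R.ι) g₀ h0, ?_⟩
      rw [Category.assoc, Category.assoc, cokernel.π_desc, hg₀, biprod.inr_desc]
    i' := biprod.inl ≫ R.ι ≫ cokernel.π (biprod.inr ≫ R.ι)
    p' := cokernel.desc (biprod.inr ≫ R.ι) (cokernel.π R.ι)
      (by rw [Category.assoc, cokernel.condition, comp_zero])
    i'w := by
      rw [Category.assoc, Category.assoc, cokernel.π_desc, cokernel.condition,
        comp_zero]
    p'pi := epi_of_epi_fac (cokernel.π_desc _ _ _)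
    i'ex := by
      intro T x hx
      obtain ⟨T₁, ρ₁, hρ₁, y, hy⟩ :=
        surjective_up_to_refinements_of_epi (cokernel.π (biprod.inr ≫ R.ι)) x
      have h2 : y ≫ cokernel.π R.ι = 0 := by
        rw [← cokernel.π_desc (biprod.inr ≫ R.ι) (cokernel.π R.ι)
          (by rw [Category.assoc, cokernel.condition, comp_zero]),
          ← Category.assoc, ← hy, Category.assoc, hx, comp_zero]
      set z := Abelian.monoLift R.ι y h2 with hzdef
      have hz : z ≫ R.ι = y := Abelian.monoLift_comp R.ι y h2
      have hdec : R.ι ≫ cokernel.π (biprod.inr ≫ R.ι)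
          = biprod.fst ≫ (biprod.inl ≫ R.ι ≫ cokernel.π (biprod.inr ≫ R.ι)) := by
        conv_lhs => rw [eq_total_comp (R.ι ≫ cokernel.π (biprod.inr ≫ R.ι))]
        rw [← Category.assoc biprod.inr, cokernel.condition, comp_zero, add_zero]
      refine ⟨T₁, ρ₁, hρ₁, z ≫ biprod.fst, ?_⟩
      have hgoal : ρ₁ ≫ x = z ≫ (R.ι ≫ cokernel.π (biprod.inr ≫ R.ι)) := by
        rw [hy, ← hz, Category.assoc]
      rw [hgoal]
      conv_lhs => rw [hdec]
      simp only [Category.assoc]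
    p'desc := by
      intro W g hg
      have ha : biprod.inr ≫ R.ι ≫ cokernel.π (biprod.inr ≫ R.ι) ≫ g = 0 := by
        rw [← Category.assoc biprod.inr R.ι, cokernel.condition_assoc, zero_comp]
      have hb : biprod.inl ≫ R.ι ≫ cokernel.π (biprod.inr ≫ R.ι) ≫ g = 0 := by
        simpa only [Category.assoc] using hg
      have h0 : R.ι ≫ cokernel.π (biprod.inr ≫ R.ι) ≫ g = 0 := by
        apply biprod.hom_ext'
        · simpa only [Category.assoc, comp_zero] using hb
        · simpa only [Category.assoc, comp_zero] using ha
      refine ⟨cokernel.desc R.ι (cokernel.π (biprod.inr ≫ R.ι) ≫ g) h0, ?_⟩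
      rw [← cancel_epi (cokernel.π (biprod.inr ≫ R.ι)), ← Category.assoc,
        cokernel.π_desc, cokernel.π_desc]
    EXT' := by
      intro W hW f
      obtain ⟨g₀, hg₀⟩ := (hR W hW).1 (biprod.desc f 0)
      have h0 : (biprod.inr ≫ R.ι) ≫ g₀ = 0 := by
        rw [Category.assoc, hg₀, biprod.inr_desc]
      refine ⟨cokernel.desc (biprod.inr ≫ R.ι) g₀ h0, ?_⟩
      rw [Category.assoc, Category.assoc, cokernel.π_desc, hg₀, biprod.inl_desc] }

/-- The full tower of states. -/
@[reducible]
noncomputable def lsState (h𝒞 : IsAdditiveSubcat 𝒞) {M N : 𝒜}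
    (R : Coresolution 𝒞 (M ⊞ N)) (hR : R.HomExact 𝒞) : ∀ n : ℕ, LS 𝒞 R n :=
  fun n => Nat.rec (lsBase R hR) (fun n l => lsStep h𝒞 hR n l) n

set_option maxHeartbeats 1000000 in
/-- A direct summand of an object of `cores 𝒞̃` lies in `cores 𝒞̃`. -/
theorem coresTilde_of_summand (h𝒞 : IsAdditiveSubcat 𝒞) {M N : 𝒜}
    (h : (M ⊞ N) ∈ coresTilde 𝒞) : M ∈ coresTilde 𝒞 := by
  obtain ⟨R, hR⟩ := h
  -- bridging facts, stated once
  have Esucc : ∀ (n : ℕ) {W : 𝒜}, W ∈ 𝒞 →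
      ∀ f : cokernel ((lsState h𝒞 R hR n).m) ⟶ W,
      ∃ g : (lsState h𝒞 R hR (n + 1)).D ⟶ W, (lsState h𝒞 R hR (n + 1)).m ≫ g = f :=
    fun n {W} hW f => (lsState h𝒞 R hR (n + 1)).E hW f
  have Mlift : ∀ (n : ℕ) {T : 𝒜} (x : T ⟶ (lsState h𝒞 R hR (n + 1)).D)
      (hx : x ≫ cokernel.π ((lsState h𝒞 R hR (n + 1)).m) = 0),
      ∃ y : T ⟶ cokernel ((lsState h𝒞 R hR n).m), y ≫ (lsState h𝒞 R hR (n + 1)).m = x := by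
    intro n T x hx
    haveI := (lsState h𝒞 R hR (n + 1)).mmono
    exact ⟨Abelian.monoLift _ x hx, Abelian.monoLift_comp _ x hx⟩
  have clause23 : ∀ (n : ℕ) {W : 𝒜}, W ∈ 𝒞 → ∀ g : (lsState h𝒞 R hR n).D ⟶ W,
      (lsState h𝒞 R hR n).m ≫ g = 0 →
      ∃ hh : (lsState h𝒞 R hR (n + 1)).D ⟶ W,
        (cokernel.π (lsState h𝒞 R hR n).m ≫ (lsState h𝒞 R hR (n + 1)).m) ≫ hh = g := by
    intro n W hW g hg
    obtain ⟨hh, hhh⟩ := Esucc n hW (cokernel.desc (lsState h𝒞 R hR n).m g hg)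
    exact ⟨hh, by rw [Category.assoc, hhh, cokernel.π_desc]⟩
  have Mcond : ∀ (n : ℕ),
      (lsState h𝒞 R hR (n + 1)).m ≫ cokernel.π ((lsState h𝒞 R hR (n + 1)).m) = 0 :=
    fun n => cokernel.condition _
  show ∃ Rm : Coresolution 𝒞 M, Rm.HomExact 𝒞
  refine ⟨{ X := fun n => (lsState h𝒞 R hR n).D
            d := fun n => cokernel.π (lsState h𝒞 R hR n).m ≫ (lsState h𝒞 R hR (n + 1)).m
            ι := (lsState h𝒞 R hR 0).m
            mem := fun n => (lsState h𝒞 R hR n).Dmem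
            mono_ι := (lsState h𝒞 R hR 0).mmono
            w0 := by rw [← Category.assoc, cokernel.condition, zero_comp]
            w := fun n => by
              rw [Category.assoc, ← Category.assoc ((lsState h𝒞 R hR (n + 1)).m),
                Mcond n, zero_comp, comp_zero]
            exact0 := ?_
            exact := ?_ }, ?_⟩
  · rw [ShortComplex.exact_iff_exact_up_to_refinements]
    intro T x hx
    haveI := (lsState h𝒞 R hR 0).mmono
    have h1 : x ≫ cokernel.π (lsState h𝒞 R hR 0).m = 0 := by
      haveI := (lsState h𝒞 R hR 1).mmono
      refine zero_of_comp_mono ((lsState h𝒞 R hR 1).m) ?_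
      rw [Category.assoc]
      exact hx
    exact ⟨T, 𝟙 T, inferInstance, Abelian.monoLift (lsState h𝒞 R hR 0).m x h1,
      by rw [Category.id_comp, Abelian.monoLift_comp]⟩
  · intro n
    rw [ShortComplex.exact_iff_exact_up_to_refinements]
    intro T x hx
    have h1 : x ≫ cokernel.π ((lsState h𝒞 R hR (n + 1)).m) = 0 := by
      haveI := (lsState h𝒞 R hR (n + 2)).mmono
      refine zero_of_comp_mono ((lsState h𝒞 R hR (n + 2)).m) ?_
      rw [Category.assoc]
      exact hx
    obtain ⟨y, hy⟩ := Mlift n x h1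
    obtain ⟨T', ρ, hρ, z, hz⟩ :=
      surjective_up_to_refinements_of_epi (cokernel.π (lsState h𝒞 R hR n).m) y
    refine ⟨T', ρ, hρ, z, ?_⟩
    show ρ ≫ x = z ≫ cokernel.π (lsState h𝒞 R hR n).m ≫ (lsState h𝒞 R hR (n + 1)).m
    rw [← hy]
    exact (Category.assoc _ _ _).symm.trans ((hz =≫ _).trans (Category.assoc _ _ _))
  · intro W hW
    refine ⟨fun f => (lsState h𝒞 R hR 0).E hW f, ?_, ?_⟩
    · intro g hg
      exact clause23 0 hW g hg
    · intro n g hg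
      have hg' : (lsState h𝒞 R hR (n + 1)).m ≫ g = 0 := by
        refine zero_of_epi_comp (cokernel.π (lsState h𝒞 R hR n).m) ?_
        rw [← Category.assoc]
        exact hg
      exact clause23 (n + 1) hW g hg'

end DirectSummandAux

/-- Proposition 3.3(1) (direct summands): `rG(𝒞)` is closed under direct summands. -/
theorem rG_closed_under_direct_summands {𝒜 : Type u} [Category.{v} 𝒜] [Abelian 𝒜] [HasExt.{w} 𝒜]
    {𝒞 : Set 𝒜} (h𝒞 : IsAdditiveSubcat 𝒞)
    {M N : 𝒜} (h : (M ⊞ N) ∈ rG 𝒞) :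
    M ∈ rG 𝒞 := by
  refine ⟨?_, coresTilde_of_summand h𝒞 h.2⟩
  intro C hC i
  have hs := h.1 C hC i
  have key : ∀ e : Abelian.Ext M C (i + 1), e = 0 := by
    intro e
    have h0 : (Ext.mk₀ (biprod.fst : M ⊞ N ⟶ M)).comp e (zero_add _) = 0 :=
      @Subsingleton.elim _ hs _ _
    calc e = (Ext.mk₀ (biprod.inl : M ⟶ M ⊞ N)).comp
              ((Ext.mk₀ (biprod.fst : M ⊞ N ⟶ M)).comp e (zero_add _)) (zero_add _) := by
            rw [Ext.mk₀_comp_mk₀_assoc, biprod.inl_fst, Ext.mk₀_id_comp]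
      _ = 0 := by rw [h0, Ext.comp_zero]
  exact ⟨fun a b => by rw [key a, key b]⟩

end RGS
end

section
/- Theorem 3.6, (1)⇔(2): Assume 𝒞 is self-orthogonal. An object M of 𝒜 lies in rG(𝒞) if and only if M ∈ ⊥𝒞 and, for every subcategory 𝒟 of 𝒜 such that 𝒞 is an injective cogenerator for 𝒟, there exists an exact and Hom(−,𝒞)-exact sequence 0 → M → D⁰ → D¹ → ⋯ in 𝒜 with all Dⁱ ∈ 𝒟. -/
open CategoryTheory CategoryTheory.Limits CategoryTheory.Abelian

universe w v u

namespace RGS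

variable {𝒜 : Type u} [Category.{v} 𝒜] [Abelian 𝒜]

/-- Theorem 3.6, (1)⇔(2): for self-orthogonal `𝒞`, `M ∈ rG(𝒞)` iff `M ∈ ⊥𝒞` and for every
subcategory `𝒟` for which `𝒞` is an injective cogenerator, `M` has an exact and
`Hom(-,𝒞)`-exact coresolution by objects of `𝒟`. -/
theorem mem_rG_iff_coresolutions_by_cogenerated {𝒜 : Type u} [Category.{v} 𝒜] [Abelian 𝒜]
    [HasExt.{w} 𝒜] {𝒞 : Set 𝒜} (h𝒞 : IsAdditiveSubcat 𝒞) (hso : IsSelfOrthogonal 𝒞) (M : 𝒜) :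
    M ∈ rG 𝒞 ↔ (M ∈ leftPerp 𝒞 ∧ ∀ 𝒟 : Set 𝒜, IsInjectiveCogen 𝒞 𝒟 →
      ∃ R : Coresolution 𝒟 M, R.HomExact 𝒞) := by
  constructor
  · rintro ⟨hperp, R, hR⟩
    refine ⟨hperp, fun 𝒟 hD => ?_⟩
    exact ⟨⟨R.X, R.d, R.ι, fun n => hD.1 (R.mem n), R.mono_ι, R.w0, R.w, R.exact0, R.exact⟩, hR⟩
  · rintro ⟨hperp, h⟩
    refine ⟨hperp, ?_⟩
    have hself : IsInjectiveCogen 𝒞 𝒞 := by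
      open ZeroObject in
      refine ⟨le_refl _, hso, fun C hC => ?_⟩
      have hepi : Epi (0 : C ⟶ (0 : 𝒜)) :=
        ⟨fun {T} g₁ g₂ _ => (isZero_zero 𝒜).eq_of_src g₁ g₂⟩
      refine ⟨C, 0, 𝟙 C, 0, by simp, ⟨?_⟩, hC, h𝒞.zero_mem 0 (isZero_zero 𝒜)⟩
      exact ShortComplex.exact_of_f_is_kernel _
        (KernelFork.IsLimit.ofι _ _ (fun {T} k _ => k) (by intros; simp)
          (fun _ _ _ hm => by simpa using hm))
    exact h 𝒞 hself


end RGS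
end

section
/- Proposition 4.5(2): Let (𝒰, 𝒱) be a hereditary cotorsion pair in 𝒜 with kernel 𝒞 = 𝒰 ∩ 𝒱, and assume (𝒰, 𝒱) has enough injectives. Then 𝒞-pd^{<∞} = 𝒰-pd^{<∞} ∩ 𝒱; that is, an object A of 𝒜 has finite 𝒞-projective dimension if and only if A ∈ 𝒱 and A has finite 𝒰-projective dimension. -/
open CategoryTheory CategoryTheory.Limits CategoryTheory.Abelian

universe w v u

namespace RGS

variable {𝒜 : Type u} [Category.{v} 𝒜] [Abelian 𝒜]

section ExtLemmas

variable [HasExt.{w} 𝒜]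

lemma ext_subsingleton_of_forall_eq_zero {X Y : 𝒜} {n : ℕ}
    (h : ∀ x : Abelian.Ext X Y n, x = 0) : Subsingleton (Abelian.Ext X Y n) :=
  ⟨fun a b => (h a).trans (h b).symm⟩

lemma ext_mid_cov {S : ShortComplex 𝒜} (hS : S.ShortExact) (X : 𝒜) (n : ℕ)
    (h₁ : Subsingleton (Abelian.Ext X S.X₁ n)) (h₃ : Subsingleton (Abelian.Ext X S.X₃ n)) :
    Subsingleton (Abelian.Ext X S.X₂ n) := by
  refine ext_subsingleton_of_forall_eq_zero fun x => ?_
  obtain ⟨x₁, hx₁⟩ := Ext.covariant_sequence_exact₂ X hS x (Subsingleton.elim _ _)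
  rw [← hx₁, Subsingleton.elim x₁ 0, Ext.zero_comp]

lemma ext_right_cov {S : ShortComplex 𝒜} (hS : S.ShortExact) (X : 𝒜) (n : ℕ)
    (h₂ : Subsingleton (Abelian.Ext X S.X₂ n)) (h₁ : Subsingleton (Abelian.Ext X S.X₁ (n + 1))) :
    Subsingleton (Abelian.Ext X S.X₃ n) := by
  refine ext_subsingleton_of_forall_eq_zero fun x => ?_
  obtain ⟨x₂, hx₂⟩ := Ext.covariant_sequence_exact₃ X hS x rfl (Subsingleton.elim _ _)
  rw [← hx₂, Subsingleton.elim x₂ 0, Ext.zero_comp]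

lemma ext_mid_contra {S : ShortComplex 𝒜} (hS : S.ShortExact) (Y : 𝒜) (n : ℕ)
    (h₁ : Subsingleton (Abelian.Ext S.X₁ Y n)) (h₃ : Subsingleton (Abelian.Ext S.X₃ Y n)) :
    Subsingleton (Abelian.Ext S.X₂ Y n) := by
  refine ext_subsingleton_of_forall_eq_zero fun x => ?_
  obtain ⟨x₁, hx₁⟩ := Ext.contravariant_sequence_exact₂ hS Y x (Subsingleton.elim _ _)
  rw [← hx₁, Subsingleton.elim x₁ 0, Ext.comp_zero]

lemma ext_iso_left {A A' C : 𝒜} (e : A ≅ A') (n : ℕ)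
    (h : Subsingleton (Abelian.Ext A C n)) : Subsingleton (Abelian.Ext A' C n) := by
  refine ext_subsingleton_of_forall_eq_zero fun x => ?_
  have h0 : (Ext.mk₀ e.hom).comp x (zero_add n) = 0 := Subsingleton.elim _ _
  calc x = (Ext.mk₀ (𝟙 A')).comp x (zero_add n) := by rw [Ext.mk₀_id_comp]
    _ = (Ext.mk₀ (e.inv ≫ e.hom)).comp x (zero_add n) := by rw [e.inv_hom_id]
    _ = (Ext.mk₀ e.inv).comp ((Ext.mk₀ e.hom).comp x (zero_add n)) (zero_add n) := by
        rw [← Ext.mk₀_comp_mk₀_assoc]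
    _ = 0 := by rw [h0, Ext.comp_zero]

lemma ext_iso_right {C A A' : 𝒜} (e : A ≅ A') (n : ℕ)
    (h : Subsingleton (Abelian.Ext C A n)) : Subsingleton (Abelian.Ext C A' n) := by
  refine ext_subsingleton_of_forall_eq_zero fun x => ?_
  have h0 : x.comp (Ext.mk₀ e.inv) (add_zero n) = 0 := Subsingleton.elim _ _
  calc x = x.comp (Ext.mk₀ (𝟙 A')) (add_zero n) := by rw [Ext.comp_mk₀_id]
    _ = x.comp (Ext.mk₀ (e.inv ≫ e.hom)) (add_zero n) := by rw [e.inv_hom_id]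
    _ = (x.comp (Ext.mk₀ e.inv) (add_zero n)).comp (Ext.mk₀ e.hom) (add_zero n) := by
        rw [← Ext.mk₀_comp_mk₀, Ext.comp_assoc_of_third_deg_zero]
    _ = 0 := by rw [h0, Ext.zero_comp]

end ExtLemmas




lemma pushout_lemma {K X A V U : 𝒜} {i : K ⟶ X} {p : X ⟶ A} {f : K ⟶ V} {r : V ⟶ U}
    {w1 : i ≫ p = 0} {w2 : f ≫ r = 0}
    (h1 : (ShortComplex.mk i p w1).ShortExact) (h2 : (ShortComplex.mk f r w2).ShortExact) :
    ∃ (Y : 𝒜) (jV : V ⟶ Y) (jX : X ⟶ Y) (qA : Y ⟶ A) (qU : Y ⟶ U)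
      (wA : jV ≫ qA = 0) (wU : jX ≫ qU = 0),
      (ShortComplex.mk jV qA wA).ShortExact ∧ (ShortComplex.mk jX qU wU).ShortExact := by
  have hmi : Mono i := h1.mono_f
  have hep : Epi p := h1.epi_g
  have hmf : Mono f := h2.mono_f
  have her : Epi r := h2.epi_g
  set l : K ⟶ X ⊞ V := biprod.lift i (-f) with hl
  have hlm : Mono l := mono_of_mono_fac (show l ≫ biprod.fst = i by simp [hl])
  set Y := cokernel l with hY
  set π : X ⊞ V ⟶ Y := cokernel.π l with hπ
  set jX : X ⟶ Y := biprod.inl ≫ π with hjX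
  set jV : V ⟶ Y := biprod.inr ≫ π with hjV
  have hlA : l ≫ biprod.desc p (0 : V ⟶ A) = 0 := by simp [hl, w1]
  have hlU : l ≫ biprod.desc (0 : X ⟶ U) r = 0 := by simp [hl, w2]
  set qA : Y ⟶ A := cokernel.desc l _ hlA with hqA
  set qU : Y ⟶ U := cokernel.desc l _ hlU with hqU
  have hex : (ShortComplex.mk l π (cokernel.condition l)).Exact :=
    ShortComplex.exact_of_g_is_cokernel _ (cokernelIsCokernel l)
  have hlsub : l = i ≫ biprod.inl - f ≫ biprod.inr := by ext <;> simp [hl]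
  have key : i ≫ jX = f ≫ jV := by
    have h0 : l ≫ π = 0 := cokernel.condition l
    rw [hlsub, Preadditive.sub_comp, sub_eq_zero] at h0
    simpa [hjX, hjV] using h0
  have hdec : ∀ {T : 𝒜} (y : T ⟶ X ⊞ V),
      y ≫ π = (y ≫ biprod.fst) ≫ jX + (y ≫ biprod.snd) ≫ jV := by
    intro T y
    have htot : (𝟙 (X ⊞ V) : X ⊞ V ⟶ X ⊞ V) =
        biprod.fst ≫ biprod.inl + biprod.snd ≫ biprod.inr := biprod.total.symm
    calc y ≫ π = y ≫ 𝟙 (X ⊞ V) ≫ π := by rw [Category.id_comp]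
      _ = _ := by
          rw [htot, Preadditive.add_comp, Preadditive.comp_add]
          simp [hjX, hjV]
  -- mono jV
  have hmjV : Mono jV := by
    rw [Preadditive.mono_iff_cancel_zero]
    intro T t ht
    obtain ⟨T', π', hπ', y, fac⟩ := hex.exact_up_to_refinements (t ≫ biprod.inr)
      (by simpa [hjV] using ht)
    have hy : y ≫ i = 0 := by
      have := fac =≫ biprod.fst
      simp only [Category.assoc, biprod.inr_fst, comp_zero] at this
      simpa [hl] using this.symm
    have hy0 : y = 0 := zero_of_comp_mono i hy
    have h6 : π' ≫ t = 0 := by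
      have := fac =≫ biprod.snd
      rw [hy0] at this
      simpa using this
    rw [← cancel_epi π', h6, comp_zero]
  -- mono jX
  have hmjX : Mono jX := by
    rw [Preadditive.mono_iff_cancel_zero]
    intro T t ht
    obtain ⟨T', π', hπ', y, fac⟩ := hex.exact_up_to_refinements (t ≫ biprod.inl)
      (by simpa [hjX] using ht)
    have hy : y ≫ f = 0 := by
      have := fac =≫ biprod.snd
      simp only [Category.assoc, biprod.inl_snd, comp_zero] at this
      have h7 : y ≫ l ≫ biprod.snd = 0 := by simpa using this.symm
      have h8 : l ≫ biprod.snd = -f := by simp [hl]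
      rw [h8] at h7
      simpa using h7
    have hy0 : y = 0 := zero_of_comp_mono f hy
    have h6 : π' ≫ t = 0 := by
      have := fac =≫ biprod.fst
      rw [hy0] at this
      simpa using this
    rw [← cancel_epi π', h6, comp_zero]
  have hwA : jV ≫ qA = 0 := by simp [hjV, hπ, hqA]
  have hwU : jX ≫ qU = 0 := by simp [hjX, hπ, hqU]
  have hpA : jX ≫ qA = p := by simp [hjX, hπ, hqA]
  have hrU : jV ≫ qU = r := by simp [hjV, hπ, hqU]
  have heqA : Epi qA := epi_of_epi_fac hpA
  have heqU : Epi qU := epi_of_epi_fac hrU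
  have hdescA : biprod.desc p (0 : V ⟶ A) = biprod.fst ≫ p := by ext <;> simp
  have hdescU : biprod.desc (0 : X ⟶ U) r = biprod.snd ≫ r := by ext <;> simp
  -- exactness at Y for (jV, qA)
  have hexA : (ShortComplex.mk jV qA hwA).Exact := by
    rw [ShortComplex.exact_iff_exact_up_to_refinements]
    intro T t ht
    obtain ⟨T₁, π₁, hπ₁, y, fac1⟩ := surjective_up_to_refinements_of_epi π t
    have h4 : y ≫ biprod.desc p (0 : V ⟶ A) = 0 := by
      have h5 : (π₁ ≫ t) ≫ qA = (y ≫ π) ≫ qA := by rw [fac1]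
      rw [Category.assoc, ht, comp_zero] at h5
      rw [Category.assoc, hqA, cokernel.π_desc] at h5
      exact h5.symm
    rw [hdescA] at h4
    obtain ⟨T₂, π₂, hπ₂, z, fac2⟩ := h1.exact.exact_up_to_refinements (y ≫ biprod.fst)
      (by simpa using h4)
    refine ⟨T₂, π₂ ≫ π₁, inferInstance, z ≫ f + (π₂ ≫ y) ≫ biprod.snd, ?_⟩
    calc (π₂ ≫ π₁) ≫ t = (π₂ ≫ y) ≫ π := by
          rw [Category.assoc, fac1, Category.assoc]
      _ = ((π₂ ≫ y) ≫ biprod.fst) ≫ jX + ((π₂ ≫ y) ≫ biprod.snd) ≫ jV := hdec _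
      _ = (z ≫ i) ≫ jX + ((π₂ ≫ y) ≫ biprod.snd) ≫ jV := by
          rw [Category.assoc π₂ y biprod.fst, fac2]
      _ = (z ≫ f) ≫ jV + ((π₂ ≫ y) ≫ biprod.snd) ≫ jV := by
          rw [Category.assoc, key, ← Category.assoc]
      _ = (z ≫ f + (π₂ ≫ y) ≫ biprod.snd) ≫ jV := (Preadditive.add_comp _ _ _ _ _ _).symm
  -- exactness at Y for (jX, qU)
  have hexU : (ShortComplex.mk jX qU hwU).Exact := by
    rw [ShortComplex.exact_iff_exact_up_to_refinements]
    intro T t ht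
    obtain ⟨T₁, π₁, hπ₁, y, fac1⟩ := surjective_up_to_refinements_of_epi π t
    have h4 : y ≫ biprod.desc (0 : X ⟶ U) r = 0 := by
      have h5 : (π₁ ≫ t) ≫ qU = (y ≫ π) ≫ qU := by rw [fac1]
      rw [Category.assoc, ht, comp_zero] at h5
      rw [Category.assoc, hqU, cokernel.π_desc] at h5
      exact h5.symm
    rw [hdescU] at h4
    obtain ⟨T₂, π₂, hπ₂, z, fac2⟩ := h2.exact.exact_up_to_refinements (y ≫ biprod.snd)
      (by simpa using h4)
    refine ⟨T₂, π₂ ≫ π₁, inferInstance, (π₂ ≫ y) ≫ biprod.fst + z ≫ i, ?_⟩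
    calc (π₂ ≫ π₁) ≫ t = (π₂ ≫ y) ≫ π := by
          rw [Category.assoc, fac1, Category.assoc]
      _ = ((π₂ ≫ y) ≫ biprod.fst) ≫ jX + ((π₂ ≫ y) ≫ biprod.snd) ≫ jV := hdec _
      _ = ((π₂ ≫ y) ≫ biprod.fst) ≫ jX + (z ≫ f) ≫ jV := by
          rw [Category.assoc π₂ y biprod.snd, fac2]
      _ = ((π₂ ≫ y) ≫ biprod.fst) ≫ jX + (z ≫ i) ≫ jX := by
          rw [Category.assoc z f jV, ← key, ← Category.assoc z i jX]
      _ = ((π₂ ≫ y) ≫ biprod.fst + z ≫ i) ≫ jX := (Preadditive.add_comp _ _ _ _ _ _).symm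
  exact ⟨Y, jV, jX, qA, qU, hwA, hwU,
    { exact := hexA, mono_f := hmjV, epi_g := heqA },
    { exact := hexU, mono_f := hmjX, epi_g := heqU }⟩




/-- Given `0 → V' → Y → K → 0` and `0 → Y → W → U → 0`, setting `Vq = W/V'` there are
short exact sequences `0 → V' → W → Vq → 0` and `0 → K → Vq → U → 0`. -/
lemma quot_lemma {V' Y K W U : 𝒜} {k : V' ⟶ Y} {p : Y ⟶ K} {g : Y ⟶ W} {s : W ⟶ U}
    {w1 : k ≫ p = 0} {w2 : g ≫ s = 0}
    (h1 : (ShortComplex.mk k p w1).ShortExact) (h2 : (ShortComplex.mk g s w2).ShortExact) :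
    ∃ (Vq : 𝒜) (m : V' ⟶ W) (pi : W ⟶ Vq) (ψ : K ⟶ Vq) (q : Vq ⟶ U)
      (wa : m ≫ pi = 0) (wb : ψ ≫ q = 0),
      (ShortComplex.mk m pi wa).ShortExact ∧ (ShortComplex.mk ψ q wb).ShortExact := by
  have hmk : Mono k := h1.mono_f
  have hep : Epi p := h1.epi_g
  have hmg : Mono g := h2.mono_f
  have hes : Epi s := h2.epi_g
  set m : V' ⟶ W := k ≫ g with hm
  have hmm : Mono m := mono_comp k g
  set Vq := cokernel m with hVq
  set pi : W ⟶ Vq := cokernel.π m with hpi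
  have wa : m ≫ pi = 0 := cokernel.condition m
  have hexc : (ShortComplex.mk m pi wa).Exact :=
    ShortComplex.exact_of_g_is_cokernel _ (cokernelIsCokernel m)
  have hse1 : (ShortComplex.mk m pi wa).ShortExact :=
    { exact := hexc, mono_f := hmm, epi_g := (inferInstance : Epi (cokernel.π m)) }
  -- ψ : K ⟶ Vq with p ≫ ψ = g ≫ pi
  have hkgpi : k ≫ g ≫ pi = 0 := by rw [← Category.assoc, ← hm, wa]
  set ψ : K ⟶ Vq := h1.exact.desc (g ≫ pi) hkgpi with hψ
  have hpψ : p ≫ ψ = g ≫ pi := h1.exact.g_desc _ hkgpi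
  -- q : Vq ⟶ U
  have hms : m ≫ s = 0 := by rw [hm, Category.assoc, w2, comp_zero]
  set q : Vq ⟶ U := cokernel.desc m s hms with hq
  have hpiq : pi ≫ q = s := by simp [hpi, hq]
  have wb : ψ ≫ q = 0 := by
    rw [← cancel_epi p, ← Category.assoc, hpψ, Category.assoc, hpiq, w2, comp_zero]
  have heq : Epi q := epi_of_epi_fac hpiq
  -- mono ψ
  have hmψ : Mono ψ := by
    rw [Preadditive.mono_iff_cancel_zero]
    intro T t ht
    obtain ⟨T₁, π₁, hπ₁, y, fac1⟩ := surjective_up_to_refinements_of_epi p t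
    -- fac1 : π₁ ≫ t = y ≫ p
    have h3 : (y ≫ g) ≫ pi = 0 := by
      have h4 : (π₁ ≫ t) ≫ ψ = (y ≫ p) ≫ ψ := by rw [fac1]
      rw [Category.assoc, ht, comp_zero, Category.assoc, hpψ] at h4
      rw [Category.assoc]
      exact h4.symm
    obtain ⟨T₂, π₂, hπ₂, z, fac2⟩ := hexc.exact_up_to_refinements (y ≫ g) h3
    -- fac2 : π₂ ≫ (y ≫ g) = z ≫ m
    have h5 : π₂ ≫ y = z ≫ k := by
      rw [← cancel_mono g, Category.assoc, Category.assoc]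
      exact fac2
    have h6 : (π₂ ≫ π₁) ≫ t = 0 := by
      rw [Category.assoc, fac1, ← Category.assoc, h5, Category.assoc, w1, comp_zero]
    rw [← cancel_epi (π₂ ≫ π₁), h6, comp_zero]
  -- exactness at Vq for (ψ, q)
  have hexb : (ShortComplex.mk ψ q wb).Exact := by
    rw [ShortComplex.exact_iff_exact_up_to_refinements]
    intro T t ht
    obtain ⟨T₁, π₁, hπ₁, y, fac1⟩ := surjective_up_to_refinements_of_epi pi t
    have h3 : y ≫ s = 0 := by
      have h4 : (π₁ ≫ t) ≫ q = (y ≫ pi) ≫ q := by rw [fac1]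
      rw [Category.assoc, ht, comp_zero, Category.assoc, hpiq] at h4
      exact h4.symm
    obtain ⟨T₂, π₂, hπ₂, z, fac2⟩ := h2.exact.exact_up_to_refinements y h3
    refine ⟨T₂, π₂ ≫ π₁, inferInstance, z ≫ p, ?_⟩
    rw [Category.assoc, fac1, ← Category.assoc, fac2, Category.assoc z g pi, ← hpψ,
      ← Category.assoc]
  exact ⟨Vq, m, pi, ψ, q, wa, wb, hse1,
    { exact := hexb, mono_f := hmψ, epi_g := heq }⟩



section Closure

variable [HasExt.{w} 𝒜] {𝒰 𝒱 : Set 𝒜}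

lemma mem_U_of_iso (hcp : IsCotorsionPair 𝒰 𝒱) {A A' : 𝒜} (e : A ≅ A') (h : A ∈ 𝒰) : A' ∈ 𝒰 := by
  rw [hcp.mem_left_iff] at h ⊢
  intro V hV
  exact ext_iso_left e 1 (h V hV)

lemma mem_V_of_iso (hcp : IsCotorsionPair 𝒰 𝒱) {A A' : 𝒜} (e : A ≅ A') (h : A ∈ 𝒱) : A' ∈ 𝒱 := by
  rw [hcp.mem_right_iff] at h ⊢
  intro U hU
  exact ext_iso_right e 1 (h U hU)

lemma mem_U_ext (hcp : IsCotorsionPair 𝒰 𝒱) {S : ShortComplex 𝒜} (hS : S.ShortExact)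
    (h1 : S.X₁ ∈ 𝒰) (h3 : S.X₃ ∈ 𝒰) : S.X₂ ∈ 𝒰 := by
  rw [hcp.mem_left_iff]
  intro V hV
  exact ext_mid_contra hS V 1 ((hcp.mem_left_iff _).mp h1 V hV) ((hcp.mem_left_iff _).mp h3 V hV)

lemma mem_V_ext (hcp : IsCotorsionPair 𝒰 𝒱) {S : ShortComplex 𝒜} (hS : S.ShortExact)
    (h1 : S.X₁ ∈ 𝒱) (h3 : S.X₃ ∈ 𝒱) : S.X₂ ∈ 𝒱 := by
  rw [hcp.mem_right_iff]
  intro U hU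
  exact ext_mid_cov hS U 1 ((hcp.mem_right_iff _).mp h1 U hU) ((hcp.mem_right_iff _).mp h3 U hU)

lemma mem_V_coker (hcp : IsCotorsionPair 𝒰 𝒱) (hh : IsHereditaryPair 𝒰 𝒱)
    {S : ShortComplex 𝒜} (hS : S.ShortExact)
    (h1 : S.X₁ ∈ 𝒱) (h2 : S.X₂ ∈ 𝒱) : S.X₃ ∈ 𝒱 := by
  rw [hcp.mem_right_iff]
  intro U hU
  exact ext_right_cov hS U 1 ((hcp.mem_right_iff _).mp h2 U hU) (hh U hU S.X₁ h1 1)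

end Closure

lemma hasResLength_mono {𝒳 𝒴 : Set 𝒜} (h : 𝒳 ⊆ 𝒴) :
    ∀ (n : ℕ) (A : 𝒜), HasResLength 𝒳 A n → HasResLength 𝒴 A n := by
  intro n
  induction n with
  | zero =>
    rintro A ⟨X, hX, he⟩
    exact ⟨X, h hX, he⟩
  | succ n ih =>
    rintro A ⟨K, X, f, g, w, hse, hX, hK⟩
    exact ⟨K, X, f, g, w, hse, h hX, ih K hK⟩

section Main

variable [HasExt.{w} 𝒜] {𝒰 𝒱 : Set 𝒜}

lemma mem_V_of_hasResLength_inter (hcp : IsCotorsionPair 𝒰 𝒱) (hh : IsHereditaryPair 𝒰 𝒱) :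
    ∀ (n : ℕ) (A : 𝒜), HasResLength (𝒰 ∩ 𝒱) A n → A ∈ 𝒱 := by
  intro n
  induction n with
  | zero =>
    rintro A ⟨X, hX, ⟨e⟩⟩
    exact mem_V_of_iso hcp e hX.2
  | succ n ih =>
    rintro A ⟨K, X, f, g, w, hse, hX, hK⟩
    exact mem_V_coker hcp hh hse (ih K hK) hX.2

lemma lemma_L (hcp : IsCotorsionPair 𝒰 𝒱) (hh : IsHereditaryPair 𝒰 𝒱)
    (hei : PairHasEnoughInjectives 𝒰 𝒱) :
    ∀ (n : ℕ) (K : 𝒜), HasResLength 𝒰 K n →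
      ∃ (V U : 𝒜) (f : K ⟶ V) (r : V ⟶ U) (w : f ≫ r = 0),
        (ShortComplex.mk f r w).ShortExact ∧ V ∈ 𝒱 ∧ U ∈ 𝒰 ∧
        HasResLength (𝒰 ∩ 𝒱) V n := by
  intro n
  induction n with
  | zero =>
    rintro K ⟨X, hX, ⟨e⟩⟩
    have hKU : K ∈ 𝒰 := mem_U_of_iso hcp e hX
    obtain ⟨V, U, f, r, w, hse, hV, hU⟩ := hei K
    have hVU : V ∈ 𝒰 := mem_U_ext hcp hse hKU hU
    exact ⟨V, U, f, r, w, hse, hV, hU, V, ⟨hVU, hV⟩, ⟨Iso.refl V⟩⟩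
  | succ n ih =>
    rintro K ⟨K', X, i, p, w, hse, hX, hK'⟩
    obtain ⟨V', U', f', r', w', hse', hV', hU', hres'⟩ := ih K' hK'
    obtain ⟨Y, jV, jX, qK, qU, wA, wU, hseA, hseU⟩ := pushout_lemma hse hse'
    have hY : Y ∈ 𝒰 := mem_U_ext hcp hseU hX hU'
    obtain ⟨W, UY, g, s, w2, hse2, hW, hUY⟩ := hei Y
    have hWU : W ∈ 𝒰 := mem_U_ext hcp hse2 hY hUY
    obtain ⟨Vq, mm, pi, ψ, q, wa, wb, hq1, hq2⟩ := quot_lemma hseA hse2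
    have hVq : Vq ∈ 𝒱 := mem_V_coker hcp hh hq1 hV' hW
    exact ⟨Vq, UY, ψ, q, wb, hq2, hVq, hUY, V', W, mm, pi, wa, hq1, ⟨hWU, hW⟩, hres'⟩

lemma lemma_M (hcp : IsCotorsionPair 𝒰 𝒱) (hh : IsHereditaryPair 𝒰 𝒱)
    (hei : PairHasEnoughInjectives 𝒰 𝒱) :
    ∀ (n : ℕ) (A : 𝒜), A ∈ 𝒱 → HasResLength 𝒰 A n → HasResLength (𝒰 ∩ 𝒱) A n := by
  intro n
  match n with
  | 0 =>
    rintro A hAV ⟨X, hX, ⟨e⟩⟩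
    exact ⟨X, ⟨hX, mem_V_of_iso hcp e.symm hAV⟩, ⟨e⟩⟩
  | n + 1 =>
    rintro A hAV ⟨K, X, i, p, w, hse, hX, hK⟩
    obtain ⟨V, U, f, r, w2, hse2, hV, hU, hres⟩ := lemma_L hcp hh hei n K hK
    obtain ⟨Y, jV, jX, qA, qU, wA, wU, hseA, hseU⟩ := pushout_lemma hse hse2
    have hYU : Y ∈ 𝒰 := mem_U_ext hcp hseU hX hU
    have hYV : Y ∈ 𝒱 := mem_V_ext hcp hseA hV hAV
    exact ⟨V, Y, jV, qA, wA, hseA, ⟨hYU, hYV⟩, hres⟩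

end Main


/-- Proposition 4.5(2): if a hereditary cotorsion pair `(𝒰, 𝒱)` with kernel `𝒞 = 𝒰 ∩ 𝒱` has
enough injectives, then `𝒞-pd^{<∞} = 𝒰-pd^{<∞} ∩ 𝒱`. -/
theorem pdFin_kernel_eq_pdFinU_inter_V {𝒜 : Type u} [Category.{v} 𝒜] [Abelian 𝒜] [HasExt.{w} 𝒜]
    {𝒰 𝒱 : Set 𝒜} (hcp : IsCotorsionPair 𝒰 𝒱) (hh : IsHereditaryPair 𝒰 𝒱)
    (hei : PairHasEnoughInjectives 𝒰 𝒱) :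
    pdFin (𝒰 ∩ 𝒱) = pdFin 𝒰 ∩ 𝒱 := by
  apply Set.Subset.antisymm
  · rintro A ⟨n, hn⟩
    exact ⟨⟨n, hasResLength_mono Set.inter_subset_left n A hn⟩,
      mem_V_of_hasResLength_inter hcp hh n A hn⟩
  · rintro A ⟨⟨n, hn⟩, hAV⟩
    exact ⟨n, lemma_M hcp hh hei n A hAV hn⟩

end RGS
end

section
/- Proposition 4.5(3): Let (𝒰, 𝒱) be a hereditary cotorsion pair in 𝒜 with kernel 𝒞 = 𝒰 ∩ 𝒱, and assume (𝒰, 𝒱) has enough injectives. Then the class 𝒞-pd^{<∞} is closed under extensions, cokernels of monomorphisms and direct summands: for any short exact sequence 0 → L → M → N → 0 in 𝒜, if L and N have finite 𝒞-projective dimension then so does M, and if L and M have finite 𝒞-projective dimension then so does N; moreover if M ⊕ N has finite 𝒞-projective dimension then so does M. -/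
open CategoryTheory CategoryTheory.Limits CategoryTheory.Abelian

universe w v u

namespace RGS

variable {𝒜 : Type u} [Category.{v} 𝒜] [Abelian 𝒜]

section AuxiliaryProofs

open ZeroObject

variable [HasExt.{w} 𝒜]

private lemma ext_eq_zero {X Y : 𝒜} {n : ℕ} (h : Subsingleton (Abelian.Ext X Y n))
    (x : Abelian.Ext X Y n) : x = 0 :=
  @Subsingleton.elim _ h x 0

private lemma subsingRetractLeft {A B Y : 𝒜} {n : ℕ} (i : A ⟶ B) (r : B ⟶ A)
    (hir : i ≫ r = 𝟙 A) (h : Subsingleton (Abelian.Ext B Y n)) :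
    Subsingleton (Abelian.Ext A Y n) := by
  have key : ∀ x : Abelian.Ext A Y n,
      (Ext.mk₀ i).comp ((Ext.mk₀ r).comp x (zero_add n)) (zero_add n) = x := fun x => by
    rw [Ext.mk₀_comp_mk₀_assoc, hir, Ext.mk₀_id_comp]
  refine ⟨fun x y => ?_⟩
  rw [← key x, ← key y, @Subsingleton.elim _ h ((Ext.mk₀ r).comp x (zero_add n))
    ((Ext.mk₀ r).comp y (zero_add n))]

private lemma subsingRetractRight {X A B : 𝒜} {n : ℕ} (i : A ⟶ B) (r : B ⟶ A)
    (hir : i ≫ r = 𝟙 A) (h : Subsingleton (Abelian.Ext X B n)) :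
    Subsingleton (Abelian.Ext X A n) := by
  have key : ∀ x : Abelian.Ext X A n,
      (x.comp (Ext.mk₀ i) (add_zero n)).comp (Ext.mk₀ r) (add_zero n) = x := fun x => by
    rw [Ext.comp_assoc_of_second_deg_zero, Ext.mk₀_comp_mk₀, hir, Ext.comp_mk₀_id]
  refine ⟨fun x y => ?_⟩
  rw [← key x, ← key y, @Subsingleton.elim _ h (x.comp (Ext.mk₀ i) (add_zero n))
    (y.comp (Ext.mk₀ i) (add_zero n))]

private lemma subsingIsZeroLeft {Z Y : 𝒜} {n : ℕ} (hZ : IsZero Z) :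
    Subsingleton (Abelian.Ext Z Y n) := by
  have key : ∀ x : Abelian.Ext Z Y n, x = 0 := fun x => by
    have h1 : (𝟙 Z : Z ⟶ Z) = 0 := hZ.eq_of_src _ _
    rw [← Ext.mk₀_id_comp x, h1, Ext.mk₀_zero, Ext.zero_comp]
  exact ⟨fun x y => by rw [key x, key y]⟩

private lemma subsingIsZeroRight {X Z : 𝒜} {n : ℕ} (hZ : IsZero Z) :
    Subsingleton (Abelian.Ext X Z n) := by
  have key : ∀ x : Abelian.Ext X Z n, x = 0 := fun x => by
    have h1 : (𝟙 Z : Z ⟶ Z) = 0 := hZ.eq_of_src _ _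
    rw [← Ext.comp_mk₀_id x, h1, Ext.mk₀_zero, Ext.comp_zero]
  exact ⟨fun x y => by rw [key x, key y]⟩

private lemma subsingX₂ {S : ShortComplex 𝒜} (hS : S.ShortExact) (X : 𝒜) {n : ℕ}
    (h₁ : Subsingleton (Abelian.Ext X S.X₁ n)) (h₃ : Subsingleton (Abelian.Ext X S.X₃ n)) :
    Subsingleton (Abelian.Ext X S.X₂ n) := by
  have key : ∀ z : Abelian.Ext X S.X₂ n, z = 0 := fun z => by
    obtain ⟨x₁, hx₁⟩ := Ext.covariant_sequence_exact₂ X hS z (ext_eq_zero h₃ _)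
    rw [← hx₁, ext_eq_zero h₁ x₁, Ext.zero_comp]
  exact ⟨fun x y => by rw [key x, key y]⟩

private lemma subsingX₃ {S : ShortComplex 𝒜} (hS : S.ShortExact) (X : 𝒜) {n : ℕ}
    (h₂ : Subsingleton (Abelian.Ext X S.X₂ n))
    (h₁ : Subsingleton (Abelian.Ext X S.X₁ (n + 1))) :
    Subsingleton (Abelian.Ext X S.X₃ n) := by
  have key : ∀ z : Abelian.Ext X S.X₃ n, z = 0 := fun z => by
    obtain ⟨x₂, hx₂⟩ := Ext.covariant_sequence_exact₃ X hS z rfl (ext_eq_zero h₁ _)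
    rw [← hx₂, ext_eq_zero h₂ x₂, Ext.zero_comp]
  exact ⟨fun x y => by rw [key x, key y]⟩

private lemma subsingBiprodLeft {A B Y : 𝒜} {n : ℕ} (hA : Subsingleton (Abelian.Ext A Y n))
    (hB : Subsingleton (Abelian.Ext B Y n)) : Subsingleton (Abelian.Ext (A ⊞ B) Y n) :=
  ⟨fun x y => Ext.biprod_ext (@Subsingleton.elim _ hA _ _) (@Subsingleton.elim _ hB _ _)⟩

private lemma biprodSES (A B : 𝒜) :
    (ShortComplex.mk (biprod.inl : A ⟶ A ⊞ B) (biprod.snd : A ⊞ B ⟶ B)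
      biprod.inl_snd).ShortExact :=
  ShortComplex.Splitting.shortExact
    { r := biprod.fst
      s := biprod.inr
      f_r := biprod.inl_fst
      s_g := biprod.inr_snd
      id := biprod.total }

private lemma subsingBiprodRight {X A B : 𝒜} {n : ℕ} (hA : Subsingleton (Abelian.Ext X A n))
    (hB : Subsingleton (Abelian.Ext X B n)) : Subsingleton (Abelian.Ext X (A ⊞ B) n) :=
  subsingX₂ (biprodSES A B) X hA hB

private lemma existsSection {S : ShortComplex 𝒜} (hS : S.ShortExact)
    (h : Subsingleton (Abelian.Ext S.X₃ S.X₁ 1)) :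
    ∃ s : S.X₃ ⟶ S.X₂, s ≫ S.g = 𝟙 S.X₃ := by
  letI := HasDerivedCategory.standard 𝒜
  have hδ : hS.singleδ = 0 := by
    rw [← hS.extClass_hom, @Subsingleton.elim _ h hS.extClass 0, Ext.zero_hom]
  obtain ⟨σ, hσ⟩ : ∃ σ : (DerivedCategory.singleFunctor 𝒜 0).obj S.X₃ ⟶
      (DerivedCategory.singleFunctor 𝒜 0).obj S.X₂,
      𝟙 _ = σ ≫ (DerivedCategory.singleFunctor 𝒜 0).map S.g :=
    Pretriangulated.Triangle.coyoneda_exact₃ hS.singleTriangle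
    hS.singleTriangle_distinguished (𝟙 (hS.singleTriangle.obj₃))
    (by show 𝟙 _ ≫ hS.singleδ = 0; rw [hδ, comp_zero])
  let H := DerivedCategory.homologyFunctor 𝒜 0
  let e : DerivedCategory.singleFunctor 𝒜 0 ≅
      CochainComplex.singleFunctor 𝒜 0 ⋙ DerivedCategory.Q :=
    (SingleFunctors.evaluation _ _ 0).mapIso (DerivedCategory.singleFunctorsPostcompQIso 𝒜)
  let γ : CochainComplex.singleFunctor 𝒜 0 ⋙
      HomologicalComplex.homologyFunctor 𝒜 (ComplexShape.up ℤ) 0 ≅ 𝟭 𝒜 :=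
    HomologicalComplex.homologyFunctorSingleIso 𝒜 (ComplexShape.up ℤ) 0
  let ν : DerivedCategory.singleFunctor 𝒜 0 ⋙ H ≅ 𝟭 𝒜 :=
    Functor.isoWhiskerRight e H ≪≫ Functor.associator _ _ _ ≪≫
      Functor.isoWhiskerLeft (CochainComplex.singleFunctor 𝒜 0)
        (DerivedCategory.homologyFunctorFactors 𝒜 0) ≪≫ γ
  refine ⟨ν.inv.app S.X₃ ≫ H.map σ ≫ ν.hom.app S.X₂, ?_⟩
  have hσ' : σ ≫ (DerivedCategory.singleFunctor 𝒜 0).map S.g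
      = 𝟙 ((DerivedCategory.singleFunctor 𝒜 0).obj S.X₃) := hσ.symm
  have hnat := ν.hom.naturality S.g
  dsimp at hnat
  rw [Category.assoc, Category.assoc, ← hnat, ← Category.assoc (H.map σ), ← Functor.map_comp]
  rw [show H.map (σ ≫ (DerivedCategory.singleFunctor 𝒜 0).map S.g) = 𝟙 _ by
    rw [hσ']; exact H.map_id _]
  rw [Category.id_comp, Iso.inv_hom_id_app]
  rfl

private lemma nonemptyIsoBiprod {S : ShortComplex 𝒜} (hS : S.ShortExact)
    (h : Subsingleton (Abelian.Ext S.X₃ S.X₁ 1)) : Nonempty (S.X₂ ≅ S.X₁ ⊞ S.X₃) := by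
  obtain ⟨s, hs⟩ := existsSection hS h
  exact ⟨(ShortComplex.Splitting.ofExactOfSection S hS.exact s hs hS.mono_f).isoBinaryBiproduct⟩

private lemma sesPullbackSnd {A X X' Z : 𝒜} {f : A ⟶ X} {g : X ⟶ Z} {w : f ≫ g = 0}
    (hse : (ShortComplex.mk f g w).ShortExact) (g' : X' ⟶ Z) :
    (ShortComplex.mk (pullback.lift f 0 (by rw [w, zero_comp]) : A ⟶ pullback g g')
      (pullback.snd g g') (pullback.lift_snd _ _ _)).ShortExact := by
  haveI : Mono f := hse.mono_f
  haveI : Epi g := hse.epi_g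
  haveI hm : Mono (pullback.lift f 0 (show f ≫ g = 0 ≫ g' by rw [w, zero_comp]) :
      A ⟶ pullback g g') := mono_of_mono_fac (pullback.lift_fst _ _ _)
  refine ShortComplex.ShortExact.mk' ?_ hm inferInstance
  apply ShortComplex.exact_of_f_is_kernel
  refine KernelFork.IsLimit.ofι' _ _ (fun {T} k hk => ?_)
  have hk1 : (k ≫ pullback.fst g g') ≫ g = 0 := by
    rw [Category.assoc, pullback.condition, ← Category.assoc, hk, zero_comp]
  refine ⟨hse.exact.lift (k ≫ pullback.fst g g') hk1, ?_⟩
  apply pullback.hom_ext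
  · erw [Category.assoc, pullback.lift_fst]
    exact hse.exact.lift_f _ _
  · erw [Category.assoc, pullback.lift_snd, comp_zero]
    exact hk.symm

private lemma sesPullbackFst {A' X X' Z : 𝒜} {f' : A' ⟶ X'} {g' : X' ⟶ Z} {w' : f' ≫ g' = 0}
    (hse' : (ShortComplex.mk f' g' w').ShortExact) (g : X ⟶ Z) :
    (ShortComplex.mk (pullback.lift 0 f' (by rw [w', zero_comp]) : A' ⟶ pullback g g')
      (pullback.fst g g') (pullback.lift_fst _ _ _)).ShortExact := by
  haveI : Mono f' := hse'.mono_f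
  haveI : Epi g' := hse'.epi_g
  haveI hm : Mono (pullback.lift 0 f' (show (0 : A' ⟶ X) ≫ g = f' ≫ g' by
      rw [w', zero_comp]) : A' ⟶ pullback g g') := mono_of_mono_fac (pullback.lift_snd _ _ _)
  refine ShortComplex.ShortExact.mk' ?_ hm inferInstance
  apply ShortComplex.exact_of_f_is_kernel
  refine KernelFork.IsLimit.ofι' _ _ (fun {T} k hk => ?_)
  have hk1 : (k ≫ pullback.snd g g') ≫ g' = 0 := by
    rw [Category.assoc, ← pullback.condition, ← Category.assoc, hk, zero_comp]
  refine ⟨hse'.exact.lift (k ≫ pullback.snd g g') hk1, ?_⟩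
  apply pullback.hom_ext
  · erw [Category.assoc, pullback.lift_fst, comp_zero]
    exact hk.symm
  · erw [Category.assoc, pullback.lift_snd]
    exact hse'.exact.lift_f _ _

private lemma sesPullbackComp {N Z M X : 𝒜} {i : N ⟶ Z} {q : Z ⟶ M} {w : i ≫ q = 0}
    (hse : (ShortComplex.mk i q w).ShortExact) (g : X ⟶ Z) (hg : Epi g) :
    (ShortComplex.mk (pullback.fst g i) (g ≫ q)
      (by rw [← Category.assoc, pullback.condition, Category.assoc, w, comp_zero])).ShortExact := by
  haveI : Mono i := hse.mono_f
  haveI : Epi q := hse.epi_g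
  haveI := hg
  haveI hm : Mono (pullback.fst g i) := inferInstance
  haveI he : Epi (g ≫ q) := epi_comp g q
  refine ShortComplex.ShortExact.mk' ?_ hm he
  apply ShortComplex.exact_of_f_is_kernel
  refine KernelFork.IsLimit.ofι' _ _ (fun {T} k hk => ?_)
  have hk1 : (k ≫ g) ≫ q = 0 := by rw [Category.assoc]; exact hk
  refine ⟨pullback.lift k (hse.exact.lift (k ≫ g) hk1) (hse.exact.lift_f _ hk1).symm, ?_⟩
  exact pullback.lift_fst _ _ _

private lemma sesBiprod {A X B A' X' B' : 𝒜} {f : A ⟶ X} {g : X ⟶ B} {w : f ≫ g = 0}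
    {f' : A' ⟶ X'} {g' : X' ⟶ B'} {w' : f' ≫ g' = 0}
    (hse : (ShortComplex.mk f g w).ShortExact) (hse' : (ShortComplex.mk f' g' w').ShortExact)
    (w'' : biprod.map f f' ≫ biprod.map g g' = 0) :
    (ShortComplex.mk (biprod.map f f') (biprod.map g g') w'').ShortExact := by
  haveI : Mono f := hse.mono_f
  haveI : Epi g := hse.epi_g
  haveI : Mono f' := hse'.mono_f
  haveI : Epi g' := hse'.epi_g
  haveI hm : Mono (biprod.map f f') := inferInstance
  haveI he : Epi (biprod.map g g') := inferInstance
  refine ShortComplex.ShortExact.mk' ?_ hm he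
  apply ShortComplex.exact_of_f_is_kernel
  refine KernelFork.IsLimit.ofι' _ _ (fun {T} k hk => ?_)
  have hk1 : (k ≫ biprod.fst) ≫ g = 0 := by
    rw [Category.assoc, ← biprod.map_fst g g', ← Category.assoc, hk, zero_comp]
  have hk2 : (k ≫ biprod.snd) ≫ g' = 0 := by
    rw [Category.assoc, ← biprod.map_snd g g', ← Category.assoc, hk, zero_comp]
  refine ⟨biprod.lift (hse.exact.lift (k ≫ biprod.fst) hk1)
    (hse'.exact.lift (k ≫ biprod.snd) hk2), ?_⟩
  apply biprod.hom_ext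
  · simp [hse.exact.lift_f]
  · simp [hse'.exact.lift_f]

private lemma sesPostIso {A X B B' : 𝒜} {f : A ⟶ X} {g : X ⟶ B} {w : f ≫ g = 0}
    (hse : (ShortComplex.mk f g w).ShortExact) (e : B ≅ B') :
    (ShortComplex.mk f (g ≫ e.hom) (by rw [← Category.assoc, w, zero_comp])).ShortExact := by
  refine ShortComplex.shortExact_of_iso ?_ hse
  exact ShortComplex.isoMk (Iso.refl _) (Iso.refl _) e (by simp) (by simp)

end AuxiliaryProofs

section MainProofs

open ZeroObject

variable [HasExt.{w} 𝒜] {𝒰 𝒱 : Set 𝒜}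

private lemma memU_retract (hcp : IsCotorsionPair 𝒰 𝒱) {A B : 𝒜} (i : A ⟶ B) (r : B ⟶ A)
    (hir : i ≫ r = 𝟙 A) (hB : B ∈ 𝒰) : A ∈ 𝒰 :=
  (hcp.mem_left_iff A).2 fun V hV =>
    subsingRetractLeft i r hir ((hcp.mem_left_iff B).1 hB V hV)

private lemma memV_retract (hcp : IsCotorsionPair 𝒰 𝒱) {A B : 𝒜} (i : A ⟶ B) (r : B ⟶ A)
    (hir : i ≫ r = 𝟙 A) (hB : B ∈ 𝒱) : A ∈ 𝒱 :=
  (hcp.mem_right_iff A).2 fun U hU =>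
    subsingRetractRight i r hir ((hcp.mem_right_iff B).1 hB U hU)

private lemma memC_retract (hcp : IsCotorsionPair 𝒰 𝒱) {A B : 𝒜} (i : A ⟶ B) (r : B ⟶ A)
    (hir : i ≫ r = 𝟙 A) (hB : B ∈ 𝒰 ∩ 𝒱) : A ∈ 𝒰 ∩ 𝒱 :=
  ⟨memU_retract hcp i r hir hB.1, memV_retract hcp i r hir hB.2⟩

private lemma memC_iso (hcp : IsCotorsionPair 𝒰 𝒱) {A B : 𝒜} (e : A ≅ B)
    (hA : A ∈ 𝒰 ∩ 𝒱) : B ∈ 𝒰 ∩ 𝒱 :=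
  memC_retract hcp e.inv e.hom e.inv_hom_id hA

private lemma memC_zero (hcp : IsCotorsionPair 𝒰 𝒱) {Z : 𝒜} (hZ : IsZero Z) : Z ∈ 𝒰 ∩ 𝒱 :=
  ⟨(hcp.mem_left_iff Z).2 fun _ _ => subsingIsZeroLeft hZ,
   (hcp.mem_right_iff Z).2 fun _ _ => subsingIsZeroRight hZ⟩

private lemma memC_biprod (hcp : IsCotorsionPair 𝒰 𝒱) {A B : 𝒜}
    (hA : A ∈ 𝒰 ∩ 𝒱) (hB : B ∈ 𝒰 ∩ 𝒱) : (A ⊞ B) ∈ 𝒰 ∩ 𝒱 :=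
  ⟨(hcp.mem_left_iff _).2 fun V hV =>
      subsingBiprodLeft ((hcp.mem_left_iff A).1 hA.1 V hV) ((hcp.mem_left_iff B).1 hB.1 V hV),
   (hcp.mem_right_iff _).2 fun U hU =>
      subsingBiprodRight ((hcp.mem_right_iff A).1 hA.2 U hU)
        ((hcp.mem_right_iff B).1 hB.2 U hU)⟩

private lemma lemmaO (hh : IsHereditaryPair 𝒰 𝒱) : ∀ (m : ℕ) (K : 𝒜),
    HasResLength (𝒰 ∩ 𝒱) K m →
    ∀ (U : 𝒜), U ∈ 𝒰 → ∀ i : ℕ, Subsingleton (Abelian.Ext U K (i + 1)) := by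
  intro m
  induction m with
  | zero =>
    rintro K ⟨C, hC, ⟨e⟩⟩ U hU i
    exact subsingRetractRight e.inv e.hom e.inv_hom_id (hh U hU C hC.2 i)
  | succ m ih =>
    rintro K ⟨K', X, f, g, w, hse, hX, hK'⟩ U hU i
    exact subsingX₃ hse U (hh U hU X hX.2 i) (ih K' hK' U hU (i + 1))

private lemma resIso (n : ℕ) {A B : 𝒜} (hA : HasResLength (𝒰 ∩ 𝒱) A n) (e : A ≅ B) :
    HasResLength (𝒰 ∩ 𝒱) B n := by
  cases n with
  | zero =>
    obtain ⟨C, hC, ⟨e'⟩⟩ := hA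
    exact ⟨C, hC, ⟨e' ≪≫ e⟩⟩
  | succ n =>
    obtain ⟨K, X, f, g, w, hse, hX, hK⟩ := hA
    exact ⟨K, X, f, g ≫ e.hom, by rw [← Category.assoc, w, zero_comp], sesPostIso hse e, hX, hK⟩

private lemma resSucc (hcp : IsCotorsionPair 𝒰 𝒱) : ∀ (n : ℕ) {A : 𝒜},
    HasResLength (𝒰 ∩ 𝒱) A n → HasResLength (𝒰 ∩ 𝒱) A (n + 1) := by
  intro n
  induction n with
  | zero =>
    rintro A ⟨C, hC, ⟨e⟩⟩
    have hmono : Mono (0 : (0 : 𝒜) ⟶ C) :=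
      ⟨fun {T} t t' _ => (isZero_zero 𝒜).eq_of_tgt t t'⟩
    have hexact : (ShortComplex.mk (0 : (0 : 𝒜) ⟶ C) e.hom zero_comp).Exact :=
      ((ShortComplex.mk (0 : (0 : 𝒜) ⟶ C) e.hom zero_comp).exact_iff_mono rfl).2
        inferInstance
    have hse : (ShortComplex.mk (0 : (0 : 𝒜) ⟶ C) e.hom zero_comp).ShortExact :=
      ShortComplex.ShortExact.mk' hexact hmono inferInstance
    exact ⟨0, C, 0, e.hom, zero_comp, hse, hC,
      ⟨0, memC_zero hcp (isZero_zero 𝒜), ⟨Iso.refl _⟩⟩⟩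
  | succ n ih =>
    rintro A ⟨K, X, f, g, w, hse, hX, hK⟩
    exact ⟨K, X, f, g, w, hse, hX, ih hK⟩

private lemma resLe (hcp : IsCotorsionPair 𝒰 𝒱) {m n : ℕ} (h : m ≤ n) {A : 𝒜}
    (hA : HasResLength (𝒰 ∩ 𝒱) A m) : HasResLength (𝒰 ∩ 𝒱) A n := by
  induction h with
  | refl => exact hA
  | step _ ih => exact resSucc hcp _ ih

private lemma resBiprod (hcp : IsCotorsionPair 𝒰 𝒱) : ∀ (n : ℕ) {A B : 𝒜},
    HasResLength (𝒰 ∩ 𝒱) A n → HasResLength (𝒰 ∩ 𝒱) B n →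
    HasResLength (𝒰 ∩ 𝒱) (A ⊞ B) n := by
  intro n
  induction n with
  | zero =>
    rintro A B ⟨C, hC, ⟨e⟩⟩ ⟨C', hC', ⟨e'⟩⟩
    exact ⟨C ⊞ C', memC_biprod hcp hC hC', ⟨biprod.mapIso e e'⟩⟩
  | succ n ih =>
    rintro A B ⟨K, X, f, g, w, hse, hX, hK⟩ ⟨K', X', f', g', w', hse', hX', hK'⟩
    have hw : biprod.map f f' ≫ biprod.map g g' = 0 := by
      apply biprod.hom_ext
      · rw [Category.assoc, biprod.map_fst, ← Category.assoc, biprod.map_fst,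
          Category.assoc, w, comp_zero, zero_comp]
      · rw [Category.assoc, biprod.map_snd, ← Category.assoc, biprod.map_snd,
          Category.assoc, w', comp_zero, zero_comp]
    exact ⟨K ⊞ K', X ⊞ X', biprod.map f f', biprod.map g g', hw, sesBiprod hse hse' hw,
      memC_biprod hcp hX hX', ih hK hK'⟩

private lemma quotC (hcp : IsCotorsionPair 𝒰 𝒱) (hh : IsHereditaryPair 𝒰 𝒱)
    {L M N : 𝒜} (f : L ⟶ M) (g : M ⟶ N) (w : f ≫ g = 0)
    (hse : (ShortComplex.mk f g w).ShortExact) {l : ℕ} (hL : HasResLength (𝒰 ∩ 𝒱) L l)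
    (hN : HasResLength (𝒰 ∩ 𝒱) N 0) : HasResLength (𝒰 ∩ 𝒱) M l := by
  obtain ⟨C, hC, ⟨e⟩⟩ := hN
  have hN𝒞 : N ∈ 𝒰 ∩ 𝒱 := memC_iso hcp e ⟨hC.1, hC.2⟩
  have hext : Subsingleton (Abelian.Ext N L 1) := lemmaO hh l L hL N hN𝒞.1 0
  obtain ⟨iso⟩ := nonemptyIsoBiprod hse hext
  exact resIso l (resBiprod hcp l hL (resLe hcp (Nat.zero_le l) ⟨C, hC, ⟨e⟩⟩)) iso.symm

private lemma P2of (hcp : IsCotorsionPair 𝒰 𝒱) (hh : IsHereditaryPair 𝒰 𝒱) (n : ℕ)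
    (p1 : ∀ {L M N : 𝒜} (f : L ⟶ M) (g : M ⟶ N) (w : f ≫ g = 0),
      (ShortComplex.mk f g w).ShortExact → (∃ l, HasResLength (𝒰 ∩ 𝒱) L l) →
      (∃ n' ≤ n, HasResLength (𝒰 ∩ 𝒱) N n') → ∃ m, HasResLength (𝒰 ∩ 𝒱) M m) :
    ∀ {L M N : 𝒜} (f : L ⟶ M) (g : M ⟶ N) (w : f ≫ g = 0),
      (ShortComplex.mk f g w).ShortExact → (∃ l ≤ n, HasResLength (𝒰 ∩ 𝒱) L l) →
      (∃ m, HasResLength (𝒰 ∩ 𝒱) M m) → ∃ k, HasResLength (𝒰 ∩ 𝒱) N k := by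
  intro L M N f g w hse hL hM
  obtain ⟨l, hl, hL⟩ := hL
  obtain ⟨m, hM⟩ := hM
  rcases m with _ | m'
  · obtain ⟨C, hC, ⟨e⟩⟩ := hM
    have hM𝒞 : M ∈ 𝒰 ∩ 𝒱 := memC_iso hcp e hC
    exact ⟨l + 1, L, M, f, g, w, hse, hM𝒞, hL⟩
  · obtain ⟨K, C0, u, v, w', hT, hC0, hK⟩ := hM
    have S1 := sesPullbackSnd hT f
    have S2 := sesPullbackComp hse v hT.epi_g
    obtain ⟨p, hP⟩ := p1 _ _ _ S1 ⟨m', hK⟩ ⟨l, hl, hL⟩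
    exact ⟨p + 1, pullback v f, C0, pullback.fst v f, v ≫ g,
      by rw [← Category.assoc, pullback.condition, Category.assoc, w, comp_zero],
      S2, hC0, hP⟩

private lemma P1 (hcp : IsCotorsionPair 𝒰 𝒱) (hh : IsHereditaryPair 𝒰 𝒱) : ∀ n : ℕ,
    ∀ {L M N : 𝒜} (f : L ⟶ M) (g : M ⟶ N) (w : f ≫ g = 0),
      (ShortComplex.mk f g w).ShortExact → (∃ l, HasResLength (𝒰 ∩ 𝒱) L l) →
      (∃ n' ≤ n, HasResLength (𝒰 ∩ 𝒱) N n') → ∃ m, HasResLength (𝒰 ∩ 𝒱) M m := by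
  intro n
  induction n with
  | zero =>
    intro L M N f g w hse hL hN
    obtain ⟨l, hL⟩ := hL
    obtain ⟨n', hn', hN⟩ := hN
    obtain rfl : n' = 0 := Nat.le_zero.mp hn'
    exact ⟨l, quotC hcp hh f g w hse hL hN⟩
  | succ n ih =>
    intro L M N f g w hse hL hN
    obtain ⟨l, hL⟩ := hL
    obtain ⟨n', hn', hN⟩ := hN
    rcases n' with _ | k
    · exact ⟨l, quotC hcp hh f g w hse hL hN⟩
    · obtain ⟨KN, C, u, v, w', hT, hC, hK⟩ := hN
      have SA := sesPullbackSnd hse v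
      have SB := sesPullbackFst hT g
      have hPfin : ∃ p, HasResLength (𝒰 ∩ 𝒱) (pullback g v) p :=
        ⟨l, quotC hcp hh _ _ _ SA hL ⟨C, hC, ⟨Iso.refl C⟩⟩⟩
      exact P2of hcp hh n ih _ _ _ SB
        ⟨k, Nat.succ_le_succ_iff.mp hn', hK⟩ hPfin

private lemma summandRes (hcp : IsCotorsionPair 𝒰 𝒱) (hh : IsHereditaryPair 𝒰 𝒱) :
    ∀ n : ℕ, ∀ (M N Z : 𝒜) (φ : M ⊞ N ≅ Z),
    HasResLength (𝒰 ∩ 𝒱) Z n → ∃ m ≤ n, HasResLength (𝒰 ∩ 𝒱) M m := by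
  intro n
  induction n with
  | zero =>
    intro M N Z φ hZ
    obtain ⟨C, hC, ⟨e⟩⟩ := hZ
    refine ⟨0, le_refl 0, M, ?_, ⟨Iso.refl M⟩⟩
    exact memC_retract hcp (biprod.inl ≫ φ.hom ≫ e.inv) (e.hom ≫ φ.inv ≫ biprod.fst)
      (by simp) hC
  | succ n ih =>
    intro M N Z φ hZ
    obtain ⟨K, C0, u, p, w, hT, hC0, hK⟩ := hZ
    -- split short exact sequences 0 → N → Z → M → 0 and 0 → M → Z → N → 0
    have base₁ : (ShortComplex.mk (biprod.inr : N ⟶ M ⊞ N) (biprod.fst : M ⊞ N ⟶ M)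
        biprod.inr_fst).ShortExact :=
      ShortComplex.Splitting.shortExact
        { r := biprod.snd
          s := biprod.inl
          f_r := biprod.inr_snd
          s_g := biprod.inl_fst
          id := by rw [add_comm]; exact biprod.total }
    have T₁ : (ShortComplex.mk (biprod.inr ≫ φ.hom) (φ.inv ≫ biprod.fst)
        (by rw [Category.assoc, Iso.hom_inv_id_assoc, biprod.inr_fst])).ShortExact := by
      apply ShortComplex.shortExact_of_iso _ base₁
      exact ShortComplex.isoMk (Iso.refl _) φ (Iso.refl _) (by simp) (by simp)
    have T₂ : (ShortComplex.mk (biprod.inl ≫ φ.hom) (φ.inv ≫ biprod.snd)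
        (by rw [Category.assoc, Iso.hom_inv_id_assoc, biprod.inl_snd])).ShortExact := by
      apply ShortComplex.shortExact_of_iso _ (biprodSES M N)
      exact ShortComplex.isoMk (Iso.refl _) φ (Iso.refl _) (by simp) (by simp)
    have SK₁a := sesPullbackComp T₁ p hT.epi_g
    have SK₁b := sesPullbackSnd hT (biprod.inr ≫ φ.hom)
    have SK₂a := sesPullbackComp T₂ p hT.epi_g
    have SK₂b := sesPullbackSnd hT (biprod.inl ≫ φ.hom)
    have hOK : ∀ i : ℕ, Subsingleton (Abelian.Ext C0 K (i + 1)) :=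
      fun i => lemmaO hh n K hK C0 hC0.1 i
    have hCC : Subsingleton (Abelian.Ext C0 C0 1) := hh C0 hC0.1 C0 hC0.2 0
    have hZ1 : Subsingleton (Abelian.Ext C0 Z 1) := subsingX₃ hT C0 hCC (hOK 1)
    have hM1 : Subsingleton (Abelian.Ext C0 M 1) :=
      subsingRetractRight (biprod.inl ≫ φ.hom) (φ.inv ≫ biprod.fst)
        (by rw [Category.assoc, Iso.hom_inv_id_assoc, biprod.inl_fst]) hZ1
    have hN1 : Subsingleton (Abelian.Ext C0 N 1) :=
      subsingRetractRight (biprod.inr ≫ φ.hom) (φ.inv ≫ biprod.snd)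
        (by rw [Category.assoc, Iso.hom_inv_id_assoc, biprod.inr_snd]) hZ1
    have hK₁1 : Subsingleton (Abelian.Ext C0 (pullback p (biprod.inr ≫ φ.hom)) 1) :=
      subsingX₂ SK₁b C0 (hOK 0) hN1
    have hK₂1 : Subsingleton (Abelian.Ext C0 (pullback p (biprod.inl ≫ φ.hom)) 1) :=
      subsingX₂ SK₂b C0 (hOK 0) hM1
    -- the biproduct short exact sequence 0 → K₁ ⊞ K₂ → C0 ⊞ C0 → Z → 0
    have z₁ : pullback.fst p (biprod.inr ≫ φ.hom) ≫ (p ≫ (φ.inv ≫ biprod.fst)) = 0 := by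
      rw [← Category.assoc, pullback.condition, Category.assoc,
        Category.assoc, Iso.hom_inv_id_assoc, biprod.inr_fst, comp_zero]
    have z₂ : pullback.fst p (biprod.inl ≫ φ.hom) ≫ (p ≫ (φ.inv ≫ biprod.snd)) = 0 := by
      rw [← Category.assoc, pullback.condition, Category.assoc,
        Category.assoc, Iso.hom_inv_id_assoc, biprod.inl_snd, comp_zero]
    have hwB : biprod.map (pullback.fst p (biprod.inr ≫ φ.hom))
        (pullback.fst p (biprod.inl ≫ φ.hom)) ≫
        biprod.map (p ≫ (φ.inv ≫ biprod.fst)) (p ≫ (φ.inv ≫ biprod.snd)) = 0 := by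
      apply biprod.hom_ext
      · rw [Category.assoc, biprod.map_fst, ← Category.assoc, biprod.map_fst,
          Category.assoc, z₁, comp_zero, zero_comp]
      · rw [Category.assoc, biprod.map_snd, ← Category.assoc, biprod.map_snd,
          Category.assoc, z₂, comp_zero, zero_comp]
    have Bses := sesPostIso (sesBiprod SK₁a SK₂a hwB) φ
    have SP1 := sesPullbackSnd hT
      (biprod.map (p ≫ (φ.inv ≫ biprod.fst)) (p ≫ (φ.inv ≫ biprod.snd)) ≫ φ.hom)
    have SP2 := sesPullbackFst Bses p
    have hsplit1 : Subsingleton (Abelian.Ext (C0 ⊞ C0) K 1) :=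
      subsingBiprodLeft (hOK 0) (hOK 0)
    have hsplit2 : Subsingleton (Abelian.Ext C0
        ((pullback p (biprod.inr ≫ φ.hom)) ⊞ (pullback p (biprod.inl ≫ φ.hom))) 1) :=
      subsingBiprodRight hK₁1 hK₂1
    obtain ⟨iso1⟩ := nonemptyIsoBiprod SP1 hsplit1
    obtain ⟨iso2⟩ := nonemptyIsoBiprod SP2 hsplit2
    have hC0C0 : HasResLength (𝒰 ∩ 𝒱) (C0 ⊞ C0) 0 :=
      ⟨C0 ⊞ C0, memC_biprod hcp hC0 hC0, ⟨Iso.refl _⟩⟩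
    have hPP : HasResLength (𝒰 ∩ 𝒱)
        (pullback p (biprod.map (p ≫ (φ.inv ≫ biprod.fst))
          (p ≫ (φ.inv ≫ biprod.snd)) ≫ φ.hom)) n :=
      resIso n (resBiprod hcp n hK (resLe hcp (Nat.zero_le n) hC0C0)) iso1.symm
    obtain ⟨m₁, hm₁, hKK⟩ := ih _ C0 _ iso2.symm hPP
    have hKKn := resLe hcp hm₁ hKK
    obtain ⟨m₂, hm₂, hK₁res⟩ := ih (pullback p (biprod.inr ≫ φ.hom))
      (pullback p (biprod.inl ≫ φ.hom)) _ (Iso.refl _) hKKn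
    exact ⟨m₂ + 1, Nat.succ_le_succ hm₂, pullback p (biprod.inr ≫ φ.hom), C0,
      pullback.fst p (biprod.inr ≫ φ.hom), p ≫ (φ.inv ≫ biprod.fst), z₁, SK₁a, hC0,
      hK₁res⟩

end MainProofs

/-- Proposition 4.5(3): if a hereditary cotorsion pair `(𝒰, 𝒱)` with kernel `𝒞 = 𝒰 ∩ 𝒱` has
enough injectives, then `𝒞-pd^{<∞}` is closed under extensions, cokernels of monomorphisms
and direct summands. -/
theorem pdFin_kernel_closure_properties {𝒜 : Type u} [Category.{v} 𝒜] [Abelian 𝒜] [HasExt.{w} 𝒜]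
    {𝒰 𝒱 : Set 𝒜} (hcp : IsCotorsionPair 𝒰 𝒱) (hh : IsHereditaryPair 𝒰 𝒱)
    (hei : PairHasEnoughInjectives 𝒰 𝒱) :
    (∀ {L M N : 𝒜} (f : L ⟶ M) (g : M ⟶ N) (w : f ≫ g = 0),
      (ShortComplex.mk f g w).ShortExact →
        (L ∈ pdFin (𝒰 ∩ 𝒱) → N ∈ pdFin (𝒰 ∩ 𝒱) → M ∈ pdFin (𝒰 ∩ 𝒱)) ∧
        (L ∈ pdFin (𝒰 ∩ 𝒱) → M ∈ pdFin (𝒰 ∩ 𝒱) → N ∈ pdFin (𝒰 ∩ 𝒱))) ∧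
    (∀ M N : 𝒜, (M ⊞ N) ∈ pdFin (𝒰 ∩ 𝒱) → M ∈ pdFin (𝒰 ∩ 𝒱)) := by
  refine ⟨?_, ?_⟩
  · intro L M N f g w hse
    refine ⟨?_, ?_⟩
    · rintro ⟨l, hL⟩ ⟨n, hN⟩
      exact P1 hcp hh n f g w hse ⟨l, hL⟩ ⟨n, le_refl n, hN⟩
    · rintro ⟨l, hL⟩ hM
      exact P2of hcp hh l (P1 hcp hh l) f g w hse ⟨l, le_refl l, hL⟩ hM
  · rintro M N ⟨n, hMN⟩
    obtain ⟨m, _, hm⟩ := summandRes hcp hh n M N (M ⊞ N) (Iso.refl _) hMN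
    exact ⟨m, hm⟩

end RGS
end
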